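/- arXiv:1503.03428 — 6 statements merged into one kernel-verified Lean document; each statement's English description precedes it below -/
import Mathlib

section
/- The middle-thirds Cantor set C ⊂ ℝ is uniformly 1/5-porous; in fact, for every closed interval B(x,r) ⊂ ℝ (of any radius r > 0) there exists y such that the open interval B°(y, r/5) is contained in B(x,r) and is disjoint from C. -/
/-!
Statement 4: the middle-thirds Cantor set `cantorSet ⊆ ℝ` is uniformly `1/5`-porous;
in fact every closed ball `B(x,r) = [x-r, x+r]` (with arbitrary radius `r > 0`) contains
an open ball of radius `r/5` disjoint from the Cantor set.
-/

/-- `E` is uniformly `β`-porous: there is `r₀ > 0` such that every closed ball of radius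
`0 < r ≤ r₀` contains an open ball of radius `β r` disjoint from `E`. -/
def UniformlyPorous {X : Type*} [MetricSpace X] (β : ℝ) (E : Set X) : Prop :=
  ∃ r₀ : ℝ, 0 < r₀ ∧ ∀ (x : X) (r : ℝ), 0 < r → r ≤ r₀ →
    ∃ y : X, Metric.ball y (β * r) ⊆ Metric.closedBall x r ∧ Metric.ball y (β * r) ∩ E = ∅

lemma myPreCantorSet_subset_unitInterval (n : ℕ) : preCantorSet n ⊆ Set.Icc 0 1 := by
  induction n with
  | zero => simp
  | succ n ih =>
    rintro z (⟨a, ha, rfl⟩ | ⟨a, ha, rfl⟩) <;>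
      obtain ⟨h0, h1⟩ := ih ha <;> constructor <;> simp only [] <;> linarith

lemma myCantor_mid (z : ℝ) (hz : z ∈ cantorSet) : z ≤ 1/3 ∨ 2/3 ≤ z := by
  have h1 : z ∈ preCantorSet 1 := Set.mem_iInter.mp hz 1
  rcases h1 with ⟨a, ha, rfl⟩ | ⟨a, ha, rfl⟩ <;>
    obtain ⟨h0, h1⟩ := myPreCantorSet_subset_unitInterval 0 ha
  · left; simp only []; linarith
  · right; simp only []; linarith

lemma myCantor_tripl (z : ℝ) (hz : z ∈ cantorSet) (h : z < 2/3) : 3*z ∈ cantorSet := by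
  refine Set.mem_iInter.mpr fun n => ?_
  have h1 : z ∈ preCantorSet (n+1) := Set.mem_iInter.mp hz (n+1)
  rcases h1 with ⟨a, ha, rfl⟩ | ⟨a, ha, rfl⟩
  · have : 3 * (a / 3) = a := by ring
    rwa [this]
  · obtain ⟨h0, h1⟩ := myPreCantorSet_subset_unitInterval n ha
    exfalso; simp only [] at h; linarith

lemma myCantor_tripr (z : ℝ) (hz : z ∈ cantorSet) (h : 1/3 < z) : 3*z - 2 ∈ cantorSet := by
  refine Set.mem_iInter.mpr fun n => ?_
  have h1 : z ∈ preCantorSet (n+1) := Set.mem_iInter.mp hz (n+1)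
  rcases h1 with ⟨a, ha, rfl⟩ | ⟨a, ha, rfl⟩
  · obtain ⟨h0, h1⟩ := myPreCantorSet_subset_unitInterval n ha
    exfalso; simp only [] at h; linarith
  · have : 3 * ((2 + a) / 3) - 2 = a := by ring
    rwa [this]

lemma myCantor_key : ∀ (n : ℕ) (x r : ℝ), 0 < r → 5/6 ≤ r * 3^n →
    ∃ y : ℝ, Metric.ball y (r / 5) ⊆ Metric.closedBall x r ∧
      Metric.ball y (r / 5) ∩ cantorSet = ∅ := by
  intro n
  induction n with
  | zero =>
    intro x r hr hbig
    simp only [pow_zero, mul_one] at hbig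
    by_cases hx : x ≤ 1/2
    · refine ⟨x - 4*r/5, ?_, ?_⟩
      · rw [Real.ball_eq_Ioo, Real.closedBall_eq_Icc]
        intro z hz; obtain ⟨hz1, hz2⟩ := hz
        constructor <;> [linarith; linarith]
      · rw [Real.ball_eq_Ioo]
        ext z; simp only [Set.mem_inter_iff, Set.mem_Ioo, Set.mem_empty_iff_false,
          iff_false, not_and]
        rintro ⟨hz1, hz2⟩ hzc
        have h0 := (cantorSet_subset_unitInterval hzc).1
        linarith
    · push_neg at hx
      refine ⟨x + 4*r/5, ?_, ?_⟩
      · rw [Real.ball_eq_Ioo, Real.closedBall_eq_Icc]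
        intro z hz; obtain ⟨hz1, hz2⟩ := hz
        constructor <;> [linarith; linarith]
      · rw [Real.ball_eq_Ioo]
        ext z; simp only [Set.mem_inter_iff, Set.mem_Ioo, Set.mem_empty_iff_false,
          iff_false, not_and]
        rintro ⟨hz1, hz2⟩ hzc
        have h1 := (cantorSet_subset_unitInterval hzc).2
        linarith
  | succ n ih =>
    intro x r hr hbig
    by_cases hbig0 : 5/6 ≤ r
    · -- same argument as base case
      by_cases hx : x ≤ 1/2
      · refine ⟨x - 4*r/5, ?_, ?_⟩
        · rw [Real.ball_eq_Ioo, Real.closedBall_eq_Icc]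
          intro z hz; obtain ⟨hz1, hz2⟩ := hz
          constructor <;> [linarith; linarith]
        · rw [Real.ball_eq_Ioo]
          ext z; simp only [Set.mem_inter_iff, Set.mem_Ioo, Set.mem_empty_iff_false,
            iff_false, not_and]
          rintro ⟨hz1, hz2⟩ hzc
          have h0 := (cantorSet_subset_unitInterval hzc).1
          linarith
      · push_neg at hx
        refine ⟨x + 4*r/5, ?_, ?_⟩
        · rw [Real.ball_eq_Ioo, Real.closedBall_eq_Icc]
          intro z hz; obtain ⟨hz1, hz2⟩ := hz
          constructor <;> [linarith; linarith]
        · rw [Real.ball_eq_Ioo]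
          ext z; simp only [Set.mem_inter_iff, Set.mem_Ioo, Set.mem_empty_iff_false,
            iff_false, not_and]
          rintro ⟨hz1, hz2⟩ hzc
          have h1 := (cantorSet_subset_unitInterval hzc).2
          linarith
    · push_neg at hbig0
      have hbig' : 5/6 ≤ (3*r) * 3^n := by
        have : r * 3^(n+1) = (3*r) * 3^n := by ring
        linarith [this ▸ hbig]
      by_cases hR : x + r < 2/3
      · -- window to the left of 2/3 : rescale via z ↦ 3 z
        obtain ⟨y', hy1, hy2⟩ := ih (3*x) (3*r) (by linarith) hbig'
        refine ⟨y'/3, ?_, ?_⟩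
        · rw [Real.ball_eq_Ioo, Real.closedBall_eq_Icc]
          rw [Real.ball_eq_Ioo, Real.closedBall_eq_Icc] at hy1
          intro z hz; obtain ⟨hz1, hz2⟩ := hz
          have h3 : 3*z ∈ Set.Ioo (y' - 3*r/5) (y' + 3*r/5) := by
            constructor <;> [linarith; linarith]
          have := hy1 (by convert h3 using 2 <;> ring)
          obtain ⟨ha, hb⟩ := this
          constructor <;> [linarith; linarith]
        · rw [Real.ball_eq_Ioo]
          ext z; simp only [Set.mem_inter_iff, Set.mem_Ioo, Set.mem_empty_iff_false,
            iff_false, not_and]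
          rintro ⟨hz1, hz2⟩ hzc
          -- z is in the closed ball around x, hence z < 2/3
          rw [Real.ball_eq_Ioo, Real.closedBall_eq_Icc] at hy1
          have h3 : 3*z ∈ Set.Ioo (y' - 3*r/5) (y' + 3*r/5) := by
            constructor <;> [linarith; linarith]
          have hzw := hy1 (by convert h3 using 2 <;> ring)
          have hzlt : z < 2/3 := by
            obtain ⟨_, hb⟩ := hzw; linarith
          have h3c : 3*z ∈ cantorSet := myCantor_tripl z hzc hzlt
          have : (3*z) ∈ Metric.ball y' (3*r/5) ∩ cantorSet := by
            rw [Real.ball_eq_Ioo]; exact ⟨h3, h3c⟩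
          rw [show (3*r/5 : ℝ) = 3*r/5 from rfl] at this
          have h5 : (3*r)/5 = 3*r/5 := by ring
          rw [← h5] at this
          rw [hy2] at this
          exact this
      · push_neg at hR
        by_cases hL : 1/3 < x - r
        · -- window to the right of 1/3 : rescale via z ↦ 3 z - 2
          obtain ⟨y', hy1, hy2⟩ := ih (3*x - 2) (3*r) (by linarith) hbig'
          refine ⟨(y' + 2)/3, ?_, ?_⟩
          · rw [Real.ball_eq_Ioo, Real.closedBall_eq_Icc]
            rw [Real.ball_eq_Ioo, Real.closedBall_eq_Icc] at hy1
            intro z hz; obtain ⟨hz1, hz2⟩ := hz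
            have h3 : 3*z - 2 ∈ Set.Ioo (y' - 3*r/5) (y' + 3*r/5) := by
              constructor <;> [linarith; linarith]
            have := hy1 (by convert h3 using 2 <;> ring)
            obtain ⟨ha, hb⟩ := this
            constructor <;> [linarith; linarith]
          · rw [Real.ball_eq_Ioo]
            ext z; simp only [Set.mem_inter_iff, Set.mem_Ioo, Set.mem_empty_iff_false,
              iff_false, not_and]
            rintro ⟨hz1, hz2⟩ hzc
            rw [Real.ball_eq_Ioo, Real.closedBall_eq_Icc] at hy1
            have h3 : 3*z - 2 ∈ Set.Ioo (y' - 3*r/5) (y' + 3*r/5) := by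
              constructor <;> [linarith; linarith]
            have hzw := hy1 (by convert h3 using 2 <;> ring)
            have hzgt : 1/3 < z := by
              obtain ⟨ha, _⟩ := hzw; linarith
            have h3c : (3*z - 2) ∈ cantorSet := myCantor_tripr z hzc hzgt
            have : (3*z - 2) ∈ Metric.ball y' ((3*r)/5) ∩ cantorSet := by
              rw [Real.ball_eq_Ioo]
              refine ⟨?_, h3c⟩
              constructor <;> [linarith [h3.1]; linarith [h3.2]]
            rw [hy2] at this
            exact this
        · push_neg at hL
          -- window straddles the middle gap (1/3, 2/3); use y = 1/2
          refine ⟨1/2, ?_, ?_⟩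
          · rw [Real.ball_eq_Ioo, Real.closedBall_eq_Icc]
            intro z hz; obtain ⟨hz1, hz2⟩ := hz
            constructor <;> [linarith; linarith]
          · rw [Real.ball_eq_Ioo]
            ext z; simp only [Set.mem_inter_iff, Set.mem_Ioo, Set.mem_empty_iff_false,
              iff_false, not_and]
            rintro ⟨hz1, hz2⟩ hzc
            rcases myCantor_mid z hzc with h | h <;> linarith

/-- **Theorem.** The middle-thirds Cantor set is uniformly `1/5`-porous; in fact for every
closed interval `B(x,r) ⊆ ℝ` with `r > 0` there is `y` such that the open interval
`B°(y, r/5)` is contained in `B(x,r)` and disjoint from the Cantor set. -/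
theorem cantorSet_uniformly_one_fifth_porous :
    (∀ (x r : ℝ), 0 < r →
      ∃ y : ℝ, Metric.ball y (r / 5) ⊆ Metric.closedBall x r ∧
        Metric.ball y (r / 5) ∩ cantorSet = ∅) ∧
    UniformlyPorous (1 / 5) cantorSet := by
  have main : ∀ (x r : ℝ), 0 < r →
      ∃ y : ℝ, Metric.ball y (r / 5) ⊆ Metric.closedBall x r ∧
        Metric.ball y (r / 5) ∩ cantorSet = ∅ := by
    intro x r hr
    obtain ⟨n, hn⟩ := pow_unbounded_of_one_lt (5/(6*r)) (by norm_num : (1:ℝ) < 3)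
    refine myCantor_key n x r hr ?_
    have h1 : 5/(6*r) < 3^n := hn
    have h2 : 0 < (6:ℝ)*r := by linarith
    rw [div_lt_iff₀ h2] at h1
    nlinarith
  refine ⟨main, 1, one_pos, fun x r hr _ => ?_⟩
  have h5 : (1/5 : ℝ) * r = r / 5 := by ring
  rw [h5]
  exact main x r hr
end

section
/- Let (X,d) be a metric space that is Ahlfors δ-regular, and let K ⊂ X be a closed Ahlfors s-regular set with s < δ. Then K is uniformly porous, i.e., there exists β ∈ (0,1) such that K is uniformly β-porous. -/
open MeasureTheory Metric ENNReal

lemma exists_maximal_separated {X : Type*} [MetricSpace X] (S : Set X) {ρ : ℝ} (hρ : 0 < ρ) :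
    ∃ T, T ⊆ S ∧ T.Pairwise (fun a b => ρ ≤ dist a b) ∧ ∀ k ∈ S, ∃ t ∈ T, dist k t < ρ := by
  have hsymm : Symmetric (fun a b : X => ρ ≤ dist a b) := fun a b h => by
    simp only [] at h ⊢; rwa [dist_comm]
  obtain ⟨T, hT⟩ := zorn_subset {T : Set X | T ⊆ S ∧ T.Pairwise (fun a b => ρ ≤ dist a b)}
    (fun c hc hchain => ⟨⋃₀ c, ⟨Set.sUnion_subset fun t ht => (hc ht).1,
      fun a ha b hb hab => by
        obtain ⟨ta, hta, hata⟩ := ha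
        obtain ⟨tb, htb, hbtb⟩ := hb
        rcases hchain.total hta htb with h | h
        · exact (hc htb).2 (h hata) hbtb hab
        · exact (hc hta).2 hata (h hbtb) hab⟩,
      fun t ht => Set.subset_sUnion_of_mem ht⟩)
  refine ⟨T, hT.prop.1, hT.prop.2, fun k hk => ?_⟩
  by_contra hcon
  push_neg at hcon
  have hknT : k ∉ T := fun hkT => absurd (hcon k hkT) (by simp [hρ])
  have hins : insert k T ∈ {T : Set X | T ⊆ S ∧ T.Pairwise (fun a b => ρ ≤ dist a b)} :=
    ⟨Set.insert_subset hk hT.prop.1, (haveI : Std.Symm (fun a b : X => ρ ≤ dist a b) := ⟨fun a b h => hsymm h⟩; Set.pairwise_insert_of_symm).2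
      ⟨hT.prop.2, fun b hb _ => hcon b hb⟩⟩
  exact hknT (hT.2 hins (Set.subset_insert k T) (Set.mem_insert k T))



/-!
Statement 5: if `X` is an Ahlfors `δ`-regular metric space and `K ⊆ X` is a closed
Ahlfors `s`-regular set with `s < δ`, then `K` is uniformly porous.
-/

/-- A closed set `K` in a metric space `X` is Ahlfors `s`-regular if there are a Borel
measure `μ` supported exactly on `K` (i.e. `μ(X \ K) = 0`, and every ball centred in `K`
has positive measure, which follows from the lower bound below) and a constant `C > 0`
with `C⁻¹ rˢ ≤ μ(B(x,r)) ≤ C rˢ` for all `x ∈ K` and `0 < r ≤ 1`. -/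
def IsAhlforsRegularSet {X : Type*} [MetricSpace X] [MeasurableSpace X]
    (s : ℝ) (K : Set X) : Prop :=
  ∃ (μ : Measure X) (C : ℝ), 0 < C ∧ μ Kᶜ = 0 ∧
    ∀ x ∈ K, ∀ r : ℝ, 0 < r → r ≤ 1 →
      ENNReal.ofReal (C⁻¹ * r ^ s) ≤ μ (Metric.closedBall x r) ∧
        μ (Metric.closedBall x r) ≤ ENNReal.ofReal (C * r ^ s)

set_option maxHeartbeats 1000000 in
/-- **Theorem.** Let `X` be an Ahlfors `δ`-regular metric space and let `K ⊆ X` be a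
closed Ahlfors `s`-regular subset with `0 ≤ s < δ`.  Then `K` is uniformly porous, i.e.
there exists `β ∈ (0,1)` such that `K` is uniformly `β`-porous. -/
theorem uniformly_porous_of_ahlfors_regular
    {X : Type*} [MetricSpace X] [MeasurableSpace X] [BorelSpace X]
    (δ s : ℝ) (hs : 0 ≤ s) (hsδ : s < δ)
    (hX : IsAhlforsRegularSet δ (Set.univ : Set X))
    (K : Set X) (hKcl : IsClosed K) (hK : IsAhlforsRegularSet s K) :
    ∃ β ∈ Set.Ioo (0 : ℝ) 1, UniformlyPorous β K := by
  obtain ⟨ν, Cν, hCν, -, hν⟩ := hX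
  obtain ⟨μ, Cμ, hCμ, -, hμ⟩ := hK
  set p : ℝ := δ - s with hpdef
  have hp : 0 < p := by simp [hpdef]; linarith
  set c : ℝ := Cμ * Cν * (Cμ * Cν * 6 ^ (s + δ)) with hcdef
  have h6 : (0:ℝ) < 6 ^ (s + δ) := Real.rpow_pos_of_pos (by norm_num) _
  have hc : 0 < c := by positivity
  set β : ℝ := min (1/2) ((2*c)⁻¹ ^ p⁻¹) with hβdef
  have hβ0 : 0 < β := lt_min (by norm_num) (Real.rpow_pos_of_pos (by positivity) _)
  have hβhalf : β ≤ 1/2 := min_le_left _ _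
  have hβp : β ^ p ≤ (2*c)⁻¹ := by
    calc β ^ p ≤ ((2*c)⁻¹ ^ p⁻¹) ^ p :=
          Real.rpow_le_rpow hβ0.le (min_le_right _ _) hp.le
      _ = (2*c)⁻¹ ^ (p⁻¹ * p) := by rw [← Real.rpow_mul (by positivity : (0:ℝ) ≤ (2*c)⁻¹)]
      _ = (2*c)⁻¹ := by rw [inv_mul_cancel₀ hp.ne', Real.rpow_one]
  refine ⟨β, ⟨hβ0, by linarith⟩, 1/4, by norm_num, fun x r hr hr4 => ?_⟩
  by_contra hcon
  push_neg at hcon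
  have hβr_pos : 0 < β * r := by positivity
  have hβrhalf : β * r ≤ r / 2 := by nlinarith
  have h3r1 : 3 * r ≤ 1 := by linarith
  have h3βr1 : 3 * (β * r) ≤ 1 := by linarith
  have hβr2 : β * r / 2 ≤ 1 := by linarith
  have hr21 : r / 2 ≤ 1 := by linarith
  have hβr_pos : 0 < β * r := by positivity
  have hβrhalf : β * r ≤ r / 2 := by nlinarith
  have h3r1 : 3 * r ≤ 1 := by linarith
  have h3βr1 : 3 * (β * r) ≤ 1 := by linarith
  have hβr2 : β * r / 2 ≤ 1 := by linarith
  have hr21 : r / 2 ≤ 1 := by linarith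
  -- every point of the smaller ball is close to K
  have near : ∀ y ∈ closedBall x ((1 - β) * r), ∃ k ∈ K, dist y k < β * r := by
    intro y hy
    have hsub : ball y (β * r) ⊆ closedBall x r := by
      intro z hz
      rw [mem_ball] at hz
      rw [mem_closedBall] at hy ⊢
      have := dist_triangle z y x
      nlinarith
    have hne := hcon y hsub
    obtain ⟨k, hk1, hk2⟩ := hne
    exact ⟨k, hk2, by rw [dist_comm]; exact mem_ball.1 hk1⟩
  set S : Set X := K ∩ closedBall x r with hSdef
  obtain ⟨y₀, hy₀K, hy₀d⟩ := near x (by simp [mem_closedBall]; nlinarith)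
  have hy₀S : y₀ ∈ S := ⟨hy₀K, by rw [mem_closedBall, dist_comm]; linarith⟩
  obtain ⟨T, hTS, hTsep, hTmax⟩ := exists_maximal_separated S
    (ρ := 2 * (β * r)) (by positivity)
  -- the counting bound for any finite subset of T
  have key2 : ∀ F : Finset X, ↑F ⊆ T →
      (F.card : ℝ) * (Cμ⁻¹ * (β * r / 2) ^ s) ≤ Cμ * (3 * r) ^ s := by
    intro F hF
    have hdisj : (↑F : Set X).PairwiseDisjoint (fun t => closedBall t (β * r / 2)) := by
      intro a ha b hb hab
      have hsep := hTsep (hF ha) (hF hb) hab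
      simp only [Function.onFun]
      rw [Set.disjoint_left]
      intro z hza hzb
      rw [mem_closedBall] at hza hzb
      have := dist_triangle a z b
      have hca : dist a z = dist z a := dist_comm a z
      nlinarith
    have hmeas : ∀ t ∈ F, MeasurableSet (closedBall t (β * r / 2)) :=
      fun t _ => measurableSet_closedBall
    have hunion : μ (⋃ t ∈ F, closedBall t (β * r / 2)) = ∑ t ∈ F, μ (closedBall t (β * r / 2)) :=
      measure_biUnion_finset hdisj hmeas
    have hlow : ∀ t ∈ F, ENNReal.ofReal (Cμ⁻¹ * (β * r / 2) ^ s) ≤ μ (closedBall t (β * r / 2)) := by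
      intro t htF
      have htK : t ∈ K := (hTS (hF htF)).1
      exact (hμ t htK (β * r / 2) (by positivity) (by linarith)).1
    have hsub : (⋃ t ∈ F, closedBall t (β * r / 2)) ⊆ closedBall y₀ (3 * r) := by
      intro z hz
      simp only [Set.mem_iUnion] at hz
      obtain ⟨t, htF, hzt⟩ := hz
      rw [mem_closedBall] at hzt ⊢
      have ht1 : dist t x ≤ r := mem_closedBall.1 (hTS (hF htF)).2
      have h1 := dist_triangle z t y₀
      have h2 := dist_triangle t x y₀
      have h3 : dist x y₀ < β * r := hy₀d
      linarith
    have hbig : μ (closedBall y₀ (3 * r)) ≤ ENNReal.ofReal (Cμ * (3 * r) ^ s) :=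
      (hμ y₀ hy₀K (3 * r) (by positivity) (by linarith)).2
    have hchain : (F.card : ℝ≥0∞) * ENNReal.ofReal (Cμ⁻¹ * (β * r / 2) ^ s)
        ≤ ENNReal.ofReal (Cμ * (3 * r) ^ s) := by
      calc (F.card : ℝ≥0∞) * ENNReal.ofReal (Cμ⁻¹ * (β * r / 2) ^ s)
          = F.card • ENNReal.ofReal (Cμ⁻¹ * (β * r / 2) ^ s) := by rw [nsmul_eq_mul]
        _ ≤ ∑ t ∈ F, μ (closedBall t (β * r / 2)) := Finset.card_nsmul_le_sum _ _ _ hlow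
        _ = μ (⋃ t ∈ F, closedBall t (β * r / 2)) := hunion.symm
        _ ≤ μ (closedBall y₀ (3 * r)) := measure_mono hsub
        _ ≤ _ := hbig
    rw [← ENNReal.ofReal_natCast, ← ENNReal.ofReal_mul (Nat.cast_nonneg _)] at hchain
    exact (ENNReal.ofReal_le_ofReal_iff (by positivity)).1 hchain
  -- T is finite
  have hTfin : T.Finite := by
    by_contra hinf
    obtain ⟨n, hn⟩ := exists_nat_gt ((Cμ * (3 * r) ^ s) / (Cμ⁻¹ * (β * r / 2) ^ s))
    obtain ⟨F, hFT, hFcard⟩ := Set.Infinite.exists_subset_card_eq hinf n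
    have := key2 F hFT
    rw [hFcard] at this
    have hepos : 0 < Cμ⁻¹ * (β * r / 2) ^ s := by positivity
    rw [div_lt_iff₀ hepos] at hn
    linarith
  set F : Finset X := hTfin.toFinset with hFdef
  have hFT : ↑F ⊆ T := by simp [hFdef]
  set N : ℕ := F.card with hNdef
  -- covering bound
  have hcover : closedBall x (r / 2) ⊆ ⋃ t ∈ F, closedBall t (3 * (β * r)) := by
    intro z hz
    rw [mem_closedBall] at hz
    obtain ⟨k, hkK, hkz⟩ := near z (by rw [mem_closedBall]; nlinarith)
    have hkS : k ∈ S := ⟨hkK, by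
      rw [mem_closedBall]
      have h1 := dist_triangle k z x
      have h2 : dist k z = dist z k := dist_comm k z
      linarith⟩
    obtain ⟨t, htT, hkt⟩ := hTmax k hkS
    simp only [Set.mem_iUnion]
    refine ⟨t, by simp [hFdef, hTfin.mem_toFinset]; exact htT, ?_⟩
    rw [mem_closedBall]
    have := dist_triangle z k t
    linarith
  have key1 : Cν⁻¹ * (r / 2) ^ δ ≤ (N : ℝ) * (Cν * (3 * (β * r)) ^ δ) := by
    have hlow : ENNReal.ofReal (Cν⁻¹ * (r / 2) ^ δ) ≤ ν (closedBall x (r / 2)) :=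
      (hν x (Set.mem_univ x) (r / 2) (by positivity) (by linarith)).1
    have hup : ∀ t ∈ F, ν (closedBall t (3 * (β * r))) ≤ ENNReal.ofReal (Cν * (3 * (β * r)) ^ δ) :=
      fun t _ => (hν t (Set.mem_univ t) (3 * (β * r)) (by positivity) (by linarith)).2
    have hchain : ENNReal.ofReal (Cν⁻¹ * (r / 2) ^ δ)
        ≤ (N : ℝ≥0∞) * ENNReal.ofReal (Cν * (3 * (β * r)) ^ δ) := by
      calc ENNReal.ofReal (Cν⁻¹ * (r / 2) ^ δ) ≤ ν (closedBall x (r / 2)) := hlow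
        _ ≤ ν (⋃ t ∈ F, closedBall t (3 * (β * r))) := measure_mono hcover
        _ ≤ ∑ t ∈ F, ν (closedBall t (3 * (β * r))) := measure_biUnion_finset_le _ _
        _ ≤ F.card • ENNReal.ofReal (Cν * (3 * (β * r)) ^ δ) :=
            Finset.sum_le_card_nsmul _ _ _ hup
        _ = (N : ℝ≥0∞) * ENNReal.ofReal (Cν * (3 * (β * r)) ^ δ) := by
            rw [nsmul_eq_mul]
    rw [← ENNReal.ofReal_natCast, ← ENNReal.ofReal_mul (Nat.cast_nonneg _)] at hchain
    exact (ENNReal.ofReal_le_ofReal_iff (by positivity)).1 hchain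
  have key2' := key2 F hFT
  rw [← hNdef] at key2'
  -- combine
  set u : ℝ := r / 2 with hudef
  have hu : 0 < u := by positivity
  have combined : (Cν⁻¹ * u ^ δ) * (Cμ⁻¹ * (β * u) ^ s)
      ≤ (Cμ * (6 * u) ^ s) * (Cν * ((6 * β) * u) ^ δ) := by
    have e1 : β * r / 2 = β * u := by rw [hudef]; ring
    have e2 : 3 * r = 6 * u := by rw [hudef]; ring
    have e3 : 3 * (β * r) = (6 * β) * u := by rw [hudef]; ring
    rw [e1, e2] at key2'
    rw [e3] at key1
    have hb : 0 ≤ Cν * ((6 * β) * u) ^ δ := by positivity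
    have he : 0 ≤ Cμ⁻¹ * (β * u) ^ s := by positivity
    calc (Cν⁻¹ * u ^ δ) * (Cμ⁻¹ * (β * u) ^ s)
        ≤ ((N : ℝ) * (Cν * ((6 * β) * u) ^ δ)) * (Cμ⁻¹ * (β * u) ^ s) :=
          mul_le_mul_of_nonneg_right key1 he
      _ = ((N : ℝ) * (Cμ⁻¹ * (β * u) ^ s)) * (Cν * ((6 * β) * u) ^ δ) := by ring
      _ ≤ (Cμ * (6 * u) ^ s) * (Cν * ((6 * β) * u) ^ δ) :=
          mul_le_mul_of_nonneg_right key2' hb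
  -- expand rpow products and cancel
  have hsp : s + p = δ := by rw [hpdef]; ring
  have E1 : (6 * u : ℝ) ^ s = 6 ^ s * u ^ s := Real.mul_rpow (by norm_num) hu.le
  have E2 : ((6 * β) * u : ℝ) ^ δ = 6 ^ δ * β ^ δ * u ^ δ := by
    rw [Real.mul_rpow (by positivity) hu.le, Real.mul_rpow (by norm_num) hβ0.le]
  have E3 : (β * u : ℝ) ^ s = β ^ s * u ^ s := Real.mul_rpow hβ0.le hu.le
  have E4 : (6 : ℝ) ^ (s + δ) = 6 ^ s * 6 ^ δ := Real.rpow_add (by norm_num) s δ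
  have E5 : (β : ℝ) ^ δ = β ^ s * β ^ p := by rw [← hsp, Real.rpow_add hβ0]
  have hexp : (Cμ * Cν * 6 ^ (s + δ) * β ^ p) * (β ^ s * (u ^ δ * u ^ s)) =
      (Cμ * (6 * u) ^ s) * (Cν * ((6 * β) * u) ^ δ) := by
    rw [E1, E2, E4, E5]; ring
  have hexp2 : (Cν⁻¹ * Cμ⁻¹) * (β ^ s * (u ^ δ * u ^ s)) =
      (Cν⁻¹ * u ^ δ) * (Cμ⁻¹ * (β * u) ^ s) := by
    rw [E3]; ring
  have hA : (0:ℝ) < β ^ s * (u ^ δ * u ^ s) := by positivity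
  have h1 : (Cν⁻¹ * Cμ⁻¹) * (β ^ s * (u ^ δ * u ^ s))
      ≤ (Cμ * Cν * 6 ^ (s + δ) * β ^ p) * (β ^ s * (u ^ δ * u ^ s)) := by
    rw [hexp, hexp2]; exact combined
  have hLR : Cν⁻¹ * Cμ⁻¹ ≤ Cμ * Cν * 6 ^ (s + δ) * β ^ p := le_of_mul_le_mul_right h1 hA
  have h2 : Cμ * Cν * (Cν⁻¹ * Cμ⁻¹) ≤ Cμ * Cν * (Cμ * Cν * 6 ^ (s + δ) * β ^ p) :=
    mul_le_mul_of_nonneg_left hLR (by positivity)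
  have hone : Cμ * Cν * (Cν⁻¹ * Cμ⁻¹) = 1 := by
    field_simp
  have hrhs : Cμ * Cν * (Cμ * Cν * 6 ^ (s + δ) * β ^ p) = c * β ^ p := by
    rw [hcdef]; ring
  have hfin : (1:ℝ) ≤ c * β ^ p := by rw [hone, hrhs] at h2; exact h2
  have h3 : c * β ^ p ≤ c * (2 * c)⁻¹ := mul_le_mul_of_nonneg_left hβp hc.le
  have h4 : c * (2 * c)⁻¹ = 1 / 2 := by
    rw [mul_inv, ← mul_assoc, mul_comm c 2⁻¹, mul_assoc, mul_inv_cancel₀ hc.ne']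
    norm_num
  linarith
end

section
/- Let (X,d) be a separable complete metric space and β ∈ (0,1). If (Tₙ)ₙ is a countable family of Borel β-BMS winning subsets of X, then ⋂ₙ Tₙ is β-BMS winning. -/
/-!
Statement 7: in a separable complete metric space, the intersection of countably many
Borel `β`-BMS winning sets is `β`-BMS winning.
-/

/-- The partial order on formal balls: `(x₂,r₂) ≤ₛ (x₁,r₁)` iff `r₂ + d(x₁,x₂) ≤ r₁`. -/
def SLeq {X : Type*} [MetricSpace X] (w₂ w₁ : X × ℝ) : Prop :=
  w₂.2 + dist w₁.1 w₂.1 ≤ w₁.2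

/-- Legality of Alice's `n`-th move in the `β`-BMS game: `ω'ₙ ≤ₛ ωₙ` and `r'ₙ = β rₙ`. -/
def BMSAliceLegal {X : Type*} [MetricSpace X] (β : ℝ) (bob alice : ℕ → X × ℝ) (n : ℕ) :
    Prop :=
  SLeq (alice n) (bob n) ∧ (alice n).2 = β * (bob n).2

/-- Legality of Bob's `n`-th move in the BMS game: his radius is positive, and if
`n = m + 1` then `ωₙ ≤ₛ ω'ₘ`.  No further restriction is put on his radii. -/
def BMSBobLegal {X : Type*} [MetricSpace X] (bob alice : ℕ → X × ℝ) (n : ℕ) : Prop :=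
  0 < (bob n).2 ∧ ∀ m, n = m + 1 → SLeq (bob n) (alice m)

/-- `T` is `β`-BMS winning: Alice has a winning strategy (a function of the history of
Bob's moves). -/
def BMSWinning {X : Type*} [MetricSpace X] (β : ℝ) (T : Set X) : Prop :=
  ∃ σ : List (X × ℝ) → X × ℝ,
    ∀ bob : ℕ → X × ℝ,
      (∀ n, (∀ m ≤ n, BMSBobLegal bob (fun k => σ ((List.range (k + 1)).map bob)) m) →
        BMSAliceLegal β bob (fun k => σ ((List.range (k + 1)).map bob)) n) ∧
      ((∀ n, BMSBobLegal bob (fun k => σ ((List.range (k + 1)).map bob)) n) →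
        ((⋂ n, Metric.closedBall (bob n).1 (bob n).2) ∩ T).Nonempty)

/-! ### Auxiliary lemmas -/

lemma sleq_trans' {X : Type*} [MetricSpace X] {w₁ w₂ w₃ : X × ℝ}
    (h₃₂ : SLeq w₃ w₂) (h₂₁ : SLeq w₂ w₁) : SLeq w₃ w₁ := by
  unfold SLeq at *
  have := dist_triangle w₁.1 w₂.1 w₃.1
  linarith

/-- Chain lemma: with legality up to `N`, Bob's later moves lie below Alice's earlier
moves. -/
lemma bms_chain {X : Type*} [MetricSpace X] (bob alice : ℕ → X × ℝ) (N : ℕ)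
    (hB : ∀ m, m + 1 ≤ N → SLeq (bob (m + 1)) (alice m))
    (hA : ∀ m, m < N → SLeq (alice m) (bob m)) :
    ∀ t', t' ≤ N → ∀ t, t < t' → SLeq (bob t') (alice t) := by
  intro t'
  induction t' with
  | zero => intro _ t ht; omega
  | succ u ih =>
    intro hu t ht
    rcases Nat.lt_succ_iff_lt_or_eq.1 ht with h | rfl
    · exact sleq_trans' (sleq_trans' (hB u hu) (hA u (by omega))) (ih (by omega) t h)
    · exact hB t hu

/-- The combined strategy: at real time `n`, play the strategy `σf n.unpair.1` on
the virtual history consisting of Bob's moves at times `Nat.pair n.unpair.1 j`,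
`j ≤ n.unpair.2`. -/
def combStrat {X : Type*} [MetricSpace X] (σf : ℕ → List (X × ℝ) → X × ℝ)
    (L : List (X × ℝ)) : X × ℝ :=
  σf (L.length - 1).unpair.1
    ((List.range ((L.length - 1).unpair.2 + 1)).map
      (fun j => L.getD (Nat.pair (L.length - 1).unpair.1 j) (σf 0 [])))

lemma combStrat_eq {X : Type*} [MetricSpace X] (σf : ℕ → List (X × ℝ) → X × ℝ)
    (bob : ℕ → X × ℝ) (k j : ℕ) :
    combStrat σf ((List.range (Nat.pair k j + 1)).map bob)
      = σf k ((List.range (j + 1)).map (fun m => bob (Nat.pair k m))) := by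
  unfold combStrat
  have h1 : ((List.range (Nat.pair k j + 1)).map bob).length - 1 = Nat.pair k j := by simp
  simp only [h1, Nat.unpair_pair]
  congr 1
  apply List.map_congr_left
  intro m hm
  have hm' : m ≤ j := Nat.lt_succ_iff.1 (List.mem_range.1 hm)
  have hle : Nat.pair k m ≤ Nat.pair k j := by
    rcases lt_or_eq_of_le hm' with h | h
    · exact (Nat.pair_lt_pair_right k h).le
    · rw [h]
  have hlt : Nat.pair k m < ((List.range (Nat.pair k j + 1)).map bob).length := by
    simp only [List.length_map, List.length_range]; omega
  rw [List.getD_eq_getElem _ _ hlt]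
  simp

/-- **Theorem.** Let `X` be a separable complete metric space and `β ∈ (0,1)`.  If
`(Tₙ)ₙ` is a countable family of Borel `β`-BMS winning subsets of `X`, then `⋂ₙ Tₙ` is
`β`-BMS winning. -/
theorem bms_winning_iInter
    {X : Type*} [MetricSpace X] [CompleteSpace X] [TopologicalSpace.SeparableSpace X]
    [MeasurableSpace X] [BorelSpace X]
    (β : ℝ) (hβ : β ∈ Set.Ioo (0 : ℝ) 1) (T : ℕ → Set X)
    (hTmeas : ∀ n, MeasurableSet (T n)) (hTwin : ∀ n, BMSWinning β (T n)) :
    BMSWinning β (⋂ n, T n) := by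
  obtain ⟨hβ0, hβ1⟩ := hβ
  choose σf hσf using hTwin
  refine ⟨combStrat σf, ?_⟩
  intro bob
  set al : ℕ → X × ℝ := fun n => combStrat σf ((List.range (n + 1)).map bob) with hal
  have hkey2 : ∀ (k j : ℕ), al (Nat.pair k j)
      = σf k ((List.range (j + 1)).map (fun m => bob (Nat.pair k m))) := by
    intro k j
    exact combStrat_eq σf bob k j
  -- Alice's moves are always legal against legal play by Bob.
  have hAL : ∀ n, (∀ m ≤ n, BMSBobLegal bob al m) → BMSAliceLegal β bob al n := by
    intro n
    induction n using Nat.strong_induction_on with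
    | _ n ih =>
      intro hB
      have hA : ∀ m, m < n → BMSAliceLegal β bob al m :=
        fun m hm => ih m hm (fun l hl => hB l (le_trans hl hm.le))
      have hchain := bms_chain bob al n (fun m hm => (hB (m + 1) hm).2 m rfl)
        (fun m hm => (hA m hm).1)
      have hpn : Nat.pair n.unpair.1 n.unpair.2 = n := Nat.pair_unpair n
      set k := n.unpair.1 with hk
      set i := n.unpair.2 with hi
      have hvleg : ∀ j ≤ i, BMSBobLegal (fun m => bob (Nat.pair k m))
          (fun j => σf k ((List.range (j + 1)).map (fun m => bob (Nat.pair k m)))) j := by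
        intro j hj
        have hjn : Nat.pair k j ≤ n := by
          rcases lt_or_eq_of_le hj with h | h
          · exact le_of_lt (hpn ▸ Nat.pair_lt_pair_right k h)
          · rw [h]; exact hpn.le
        constructor
        · exact (hB _ hjn).1
        · intro m hm
          subst hm
          have h1 : Nat.pair k m < Nat.pair k (m + 1) :=
            Nat.pair_lt_pair_right k (Nat.lt_succ_self m)
          have h2 := hchain (Nat.pair k (m + 1)) hjn (Nat.pair k m) h1
          rw [hkey2 k m] at h2
          exact h2
      have hva := (hσf k (fun m => bob (Nat.pair k m))).1 i hvleg
      obtain ⟨hva1, hva2⟩ := hva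
      have halrw : al n = σf k ((List.range (i + 1)).map (fun m => bob (Nat.pair k m))) := by
        conv_lhs => rw [← hpn]
        exact hkey2 k i
      constructor
      · rw [halrw]
        have : (fun m => bob (Nat.pair k m)) i = bob n := congrArg bob hpn
        rw [← this]
        exact hva1
      · rw [halrw]
        have : (fun m => bob (Nat.pair k m)) i = bob n := congrArg bob hpn
        rw [← this]
        exact hva2
  refine ⟨hAL, ?_⟩
  -- Now suppose Bob plays legally forever.
  intro hB
  have hA : ∀ n, BMSAliceLegal β bob al n := fun n => hAL n (fun m _ => hB m)
  have hchain : ∀ t' t, t < t' → SLeq (bob t') (al t) := fun t' t ht =>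
    bms_chain bob al t' (fun m _ => (hB (m + 1)).2 m rfl) (fun m _ => (hA m).1) t' le_rfl t ht
  have hnest : ∀ t t', t ≤ t' → SLeq (bob t') (bob t) := by
    intro t t' ht
    rcases lt_or_eq_of_le ht with h | rfl
    · exact sleq_trans' (hchain t' t h) ((hA t).1)
    · unfold SLeq; simp
  have hrpos : ∀ n, 0 < (bob n).2 := fun n => (hB n).1
  have hstep : ∀ n, (bob (n + 1)).2 ≤ β * (bob n).2 := by
    intro n
    have h1 := (hB (n + 1)).2 n rfl
    have h2 := (hA n).2
    unfold SLeq at h1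
    have := dist_nonneg (x := (al n).1) (y := (bob (n + 1)).1)
    linarith
  have hgeom : ∀ n, (bob n).2 ≤ (bob 0).2 * β ^ n := by
    intro n
    induction n with
    | zero => simp
    | succ m ihm =>
      calc (bob (m + 1)).2 ≤ β * (bob m).2 := hstep m
        _ ≤ β * ((bob 0).2 * β ^ m) := by nlinarith
        _ = (bob 0).2 * β ^ (m + 1) := by ring
  have hdist : ∀ t t', t ≤ t' → dist (bob t).1 (bob t').1 ≤ (bob t).2 := by
    intro t t' ht
    have h := hnest t t' ht
    unfold SLeq at h
    have := hrpos t'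
    linarith
  have hcau : CauchySeq (fun n => (bob n).1) := by
    apply cauchySeq_of_le_geometric β ((bob 0).2) hβ1
    intro n
    calc dist (bob n).1 (bob (n + 1)).1 ≤ (bob n).2 := hdist n (n + 1) (by omega)
      _ ≤ (bob 0).2 * β ^ n := hgeom n
  obtain ⟨x, hx⟩ := cauchySeq_tendsto_of_complete hcau
  have hball : ∀ n, x ∈ Metric.closedBall (bob n).1 (bob n).2 := by
    intro n
    rw [Metric.mem_closedBall, dist_comm]
    have ht : Filter.Tendsto (fun m => dist (bob n).1 (bob m).1) Filter.atTop
        (nhds (dist (bob n).1 x)) := Filter.Tendsto.dist tendsto_const_nhds hx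
    exact le_of_tendsto ht (Filter.eventually_atTop.2 ⟨n, fun m hm => hdist n m hm⟩)
  have hT : ∀ k, x ∈ T k := by
    intro k
    have hvleg : ∀ j, BMSBobLegal (fun m => bob (Nat.pair k m))
        (fun j => σf k ((List.range (j + 1)).map (fun m => bob (Nat.pair k m)))) j := by
      intro j
      constructor
      · exact (hB _).1
      · intro m hm
        subst hm
        have h2 := hchain (Nat.pair k (m + 1)) (Nat.pair k m)
          (Nat.pair_lt_pair_right k (Nat.lt_succ_self m))
        rw [hkey2 k m] at h2
        exact h2
    obtain ⟨y, hy1, hy2⟩ := (hσf k (fun m => bob (Nat.pair k m))).2 hvleg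
    have hxy : x = y := by
      have hd : ∀ j : ℕ, dist x y ≤ 2 * ((bob 0).2 * β ^ j) := by
        intro j
        have h1 : dist x (bob (Nat.pair k j)).1 ≤ (bob (Nat.pair k j)).2 := by
          have := hball (Nat.pair k j)
          rw [Metric.mem_closedBall] at this
          linarith [this]
        have h2 : dist (bob (Nat.pair k j)).1 y ≤ (bob (Nat.pair k j)).2 := by
          have := Set.mem_iInter.1 hy1 j
          rw [Metric.mem_closedBall, dist_comm] at this
          exact this
        have h3 : (bob (Nat.pair k j)).2 ≤ (bob 0).2 * β ^ j := by
          refine le_trans (hgeom _) ?_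
          have hp : β ^ (Nat.pair k j) ≤ β ^ j :=
            pow_le_pow_of_le_one hβ0.le hβ1.le (Nat.right_le_pair k j)
          nlinarith [hrpos 0]
        calc dist x y ≤ dist x (bob (Nat.pair k j)).1 + dist (bob (Nat.pair k j)).1 y :=
              dist_triangle _ _ _
          _ ≤ 2 * ((bob 0).2 * β ^ j) := by linarith
      have hlim : Filter.Tendsto (fun j : ℕ => 2 * ((bob 0).2 * β ^ j)) Filter.atTop
          (nhds 0) := by
        have h0 : Filter.Tendsto (fun j : ℕ => β ^ j) Filter.atTop (nhds 0) :=
          tendsto_pow_atTop_nhds_zero_of_lt_one hβ0.le hβ1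
        have := h0.const_mul (2 * (bob 0).2)
        simpa [mul_assoc, mul_comm, mul_left_comm] using this
      have hle0 : dist x y ≤ 0 := ge_of_tendsto hlim (Filter.Eventually.of_forall hd)
      exact eq_of_dist_eq_zero (le_antisymm hle0 dist_nonneg)
    rw [hxy]
    exact hy2
  exact ⟨x, Set.mem_iInter.2 hball, Set.mem_iInter.2 hT⟩
end

section
/- Let (X,d) be a separable complete metric space and β ∈ (0,1). If (Tₙ)ₙ is a countable family of Borel β-BMM winning subsets of X, then ⋂ₙ Tₙ is β-BMM winning. -/
/-- Legality of Alice's `n`-th move in the `β`-BMM game: her move is a formal ball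
(`r'ₙ > 0`) placed anywhere, with `r'ₙ ≤ β rₙ`. -/
def BMMAliceLegal {X : Type*} [MetricSpace X] (β : ℝ) (bob alice : ℕ → X × ℝ) (n : ℕ) :
    Prop :=
  0 < (alice n).2 ∧ (alice n).2 ≤ β * (bob n).2

/-- Legality of Bob's `n`-th move in the BMM game: his radius is positive, and if
`n = m + 1` then `ωₙ ≤ₛ ωₘ` and `d(x'ₘ, xₙ) ≥ r'ₘ + rₙ`.  No lower bound is imposed on
Bob's radii. -/
def BMMBobLegal {X : Type*} [MetricSpace X] (bob alice : ℕ → X × ℝ) (n : ℕ) : Prop :=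
  0 < (bob n).2 ∧ ∀ m, n = m + 1 →
    SLeq (bob n) (bob m) ∧ (alice m).2 + (bob n).2 ≤ dist (alice m).1 (bob n).1

/-- `T` is `β`-BMM winning: Alice has a winning strategy (a function of the history of
Bob's moves).  Plays in which Bob gets stuck with no legal move are counted as wins for
Alice (the winning condition holds vacuously for them). -/
def BMMWinning {X : Type*} [MetricSpace X] (β : ℝ) (T : Set X) : Prop :=
  ∃ σ : List (X × ℝ) → X × ℝ,
    ∀ bob : ℕ → X × ℝ,
      (∀ n, (∀ m ≤ n, BMMBobLegal bob (fun k => σ ((List.range (k + 1)).map bob)) m) →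
        BMMAliceLegal β bob (fun k => σ ((List.range (k + 1)).map bob)) n) ∧
      ((∀ n, BMMBobLegal bob (fun k => σ ((List.range (k + 1)).map bob)) n) →
        ((⋂ n, Metric.closedBall (bob n).1 (bob n).2) ∩ T).Nonempty)

namespace BMMAux

variable {X : Type*} [MetricSpace X]

theorem sleq_refl (w : X × ℝ) : SLeq w w := by simp [SLeq]

theorem sleq_trans {a b c : X × ℝ} (h1 : SLeq a b) (h2 : SLeq b c) : SLeq a c := by
  have := dist_triangle c.1 b.1 a.1
  unfold SLeq at *
  linarith

theorem pair_le_pair_right (a : ℕ) {b₁ b₂ : ℕ} (h : b₁ ≤ b₂) :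
    Nat.pair a b₁ ≤ Nat.pair a b₂ := by
  rcases Nat.lt_or_ge b₁ b₂ with h' | h'
  · exact (Nat.pair_lt_pair_right a h').le
  · have : b₁ = b₂ := le_antisymm h h'
    simp [this]

/-- The combined strategy interleaving the contraction move (tag 0) with the
strategies `σs j` (tag `j+1`), scheduled by `Nat.unpair`. -/
noncomputable def comb (β : ℝ) (d : X × ℝ) (σs : ℕ → List (X × ℝ) → X × ℝ)
    (h : List (X × ℝ)) : X × ℝ :=
  let n := h.length - 1
  if (Nat.unpair n).1 = 0 then
    ((h.getD n d).1, β * (h.getD n d).2)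
  else
    σs ((Nat.unpair n).1 - 1)
      ((List.range ((Nat.unpair n).2 + 1)).map
        (fun s => h.getD (Nat.pair (Nat.unpair n).1 s) d))

theorem comb_eval (β : ℝ) (d : X × ℝ) (σs : ℕ → List (X × ℝ) → X × ℝ)
    (bob : ℕ → X × ℝ) (n : ℕ) :
    comb β d σs ((List.range (n + 1)).map bob) =
      if (Nat.unpair n).1 = 0 then ((bob n).1, β * (bob n).2)
      else σs ((Nat.unpair n).1 - 1)
        ((List.range ((Nat.unpair n).2 + 1)).map
          (fun s => bob (Nat.pair (Nat.unpair n).1 s))) := by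
  have hlen : ((List.range (n + 1)).map bob).length = n + 1 := by simp
  have hget : ∀ i ≤ n, ((List.range (n + 1)).map bob).getD i d = bob i := by
    intro i hi
    rw [List.getD_eq_getElem _ _ (by simp [hlen]; omega)]
    simp
  unfold comb
  simp only [hlen, Nat.add_sub_cancel]
  split
  · rw [hget n le_rfl]
  · congr 1
    apply List.map_congr_left
    intro s hs
    have hs' : s ≤ (Nat.unpair n).2 := by
      simp [List.mem_range] at hs; omega
    apply hget
    calc Nat.pair (Nat.unpair n).1 s ≤ Nat.pair (Nat.unpair n).1 (Nat.unpair n).2 :=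
          pair_le_pair_right _ hs'
      _ = n := Nat.pair_unpair n

end BMMAux

/-- **Theorem.** Let `X` be a separable complete metric space and `β ∈ (0,1)`.  If
`(Tₙ)ₙ` is a countable family of Borel `β`-BMM winning subsets of `X`, then `⋂ₙ Tₙ` is
`β`-BMM winning. -/
theorem bmm_winning_iInter
    {X : Type*} [MetricSpace X] [CompleteSpace X] [TopologicalSpace.SeparableSpace X]
    [MeasurableSpace X] [BorelSpace X]
    (β : ℝ) (hβ : β ∈ Set.Ioo (0 : ℝ) 1) (T : ℕ → Set X)
    (hTmeas : ∀ n, MeasurableSet (T n)) (hTwin : ∀ n, BMMWinning β (T n)) :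
    BMMWinning β (⋂ n, T n) := by
  obtain ⟨hβ0, hβ1⟩ := hβ
  choose σs hσs using hTwin
  set d := σs 0 [] with hd
  refine ⟨BMMAux.comb β d σs, fun bob => ?_⟩
  set alice := fun k => BMMAux.comb β d σs ((List.range (k + 1)).map bob) with halice
  have hcomp : ∀ n, alice n =
      if (Nat.unpair n).1 = 0 then ((bob n).1, β * (bob n).2)
      else σs ((Nat.unpair n).1 - 1)
        ((List.range ((Nat.unpair n).2 + 1)).map
          (fun s => bob (Nat.pair (Nat.unpair n).1 s))) :=
    fun n => BMMAux.comb_eval β d σs bob n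
  have hcomp0 : ∀ t, alice (Nat.pair 0 t) =
      ((bob (Nat.pair 0 t)).1, β * (bob (Nat.pair 0 t)).2) := by
    intro t
    rw [hcomp]
    simp [Nat.unpair_pair]
  have hcompk : ∀ j t, alice (Nat.pair (j + 1) t) =
      σs j ((List.range (t + 1)).map (fun s => bob (Nat.pair (j + 1) s))) := by
    intro j t
    rw [hcomp]
    simp [Nat.unpair_pair]
  -- transitivity chain for Bob's balls
  have chain : ∀ a, (∀ i ≤ a, BMMBobLegal bob alice i) → ∀ b ≤ a, SLeq (bob a) (bob b) := by
    intro a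
    induction a with
    | zero =>
      intro _ b hb
      have : b = 0 := Nat.le_zero.mp hb
      subst this
      exact BMMAux.sleq_refl _
    | succ a ih =>
      intro hleg b hb
      rcases Nat.eq_or_lt_of_le hb with h | h
      · subst h; exact BMMAux.sleq_refl _
      · have hb' : b ≤ a := Nat.lt_succ_iff.mp h
        have h1 : SLeq (bob (a + 1)) (bob a) := ((hleg (a + 1) le_rfl).2 a rfl).1
        exact BMMAux.sleq_trans h1
          (ih (fun i hi => hleg i (hi.trans (Nat.le_succ a))) b hb')
  -- legality transfer to the subgames
  have hsub : ∀ j m, (∀ i ≤ Nat.pair (j + 1) m, BMMBobLegal bob alice i) →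
      BMMBobLegal (fun s => bob (Nat.pair (j + 1) s))
        (fun s => σs j ((List.range (s + 1)).map (fun u => bob (Nat.pair (j + 1) u)))) m := by
    intro j m hleg
    constructor
    · exact (hleg (Nat.pair (j + 1) m) le_rfl).1
    · intro s hs
      subst hs
      set c := Nat.pair (j + 1) s with hc
      set a := Nat.pair (j + 1) (s + 1) with ha
      have hca : c < a := Nat.pair_lt_pair_right _ (Nat.lt_succ_self s)
      have hc1a : c + 1 ≤ a := hca
      obtain ⟨_, h2⟩ := hleg (c + 1) hc1a
      obtain ⟨hsle1, havoid1⟩ := h2 c rfl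
      have hslea : SLeq (bob a) (bob (c + 1)) := chain a hleg (c + 1) hc1a
      have halc : σs j ((List.range (s + 1)).map (fun u => bob (Nat.pair (j + 1) u)))
          = alice c := (hcompk j s).symm
      constructor
      · exact BMMAux.sleq_trans hslea hsle1
      · show (σs j ((List.range (s + 1)).map (fun u => bob (Nat.pair (j + 1) u)))).2
            + (bob a).2 ≤
          dist (σs j ((List.range (s + 1)).map (fun u => bob (Nat.pair (j + 1) u)))).1
            (bob a).1
        rw [halc]
        have tri : dist (alice c).1 (bob (c + 1)).1 ≤
            dist (alice c).1 (bob a).1 + dist (bob a).1 (bob (c + 1)).1 :=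
          dist_triangle _ _ _
        have hdc : dist (bob a).1 (bob (c + 1)).1 = dist (bob (c + 1)).1 (bob a).1 :=
          dist_comm _ _
        unfold SLeq at hslea
        linarith
  constructor
  · -- Alice's moves are legal
    intro n hleg
    cases hk0 : (Nat.unpair n).1 with
    | zero =>
      have h : alice n = ((bob n).1, β * (bob n).2) := by
        rw [hcomp n, hk0]; simp
      refine ⟨?_, ?_⟩
      · rw [h]
        exact mul_pos hβ0 (hleg n le_rfl).1
      · rw [h]
    | succ j =>
      have hn : Nat.pair (j + 1) (Nat.unpair n).2 = n := by
        rw [← hk0]; exact Nat.pair_unpair n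
      set t := (Nat.unpair n).2 with hT
      have hAll : ∀ m ≤ t,
          BMMBobLegal (fun s => bob (Nat.pair (j + 1) s))
            (fun s => σs j ((List.range (s + 1)).map
              (fun u => bob (Nat.pair (j + 1) u)))) m := by
        intro m hm
        refine hsub j m (fun i hi => hleg i ?_)
        calc i ≤ Nat.pair (j + 1) m := hi
          _ ≤ Nat.pair (j + 1) t := BMMAux.pair_le_pair_right _ hm
          _ = n := hn
      have hA := (hσs j (fun s => bob (Nat.pair (j + 1) s))).1 t hAll
      rw [← hn]
      refine ⟨?_, ?_⟩
      · rw [hcompk j t]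
        exact hA.1
      · rw [hcompk j t]
        exact hA.2
  · -- the winning condition
    intro hleg
    have rpos : ∀ n, 0 < (bob n).2 := fun n => (hleg n).1
    have distball : ∀ {b a : ℕ}, b ≤ a → dist (bob b).1 (bob a).1 ≤ (bob b).2 := by
      intro b a hba
      have h := chain a (fun i _ => hleg i) b hba
      unfold SLeq at h
      have := rpos a
      linarith
    have rmono : ∀ {b a : ℕ}, b ≤ a → (bob a).2 ≤ (bob b).2 := by
      intro b a hba
      have h := chain a (fun i _ => hleg i) b hba
      unfold SLeq at h
      have := dist_nonneg (x := (bob b).1) (y := (bob a).1)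
      linarith
    set γ : ℝ := (1 - β) / 2 with hγ
    have hγ0 : 0 ≤ γ := by rw [hγ]; linarith
    have hγ1 : γ < 1 := by rw [hγ]; linarith
    have contract : ∀ t, (bob (Nat.pair 0 t + 1)).2 ≤ γ * (bob (Nat.pair 0 t)).2 := by
      intro t
      set n := Nat.pair 0 t with hn
      obtain ⟨_, h2⟩ := hleg (n + 1)
      obtain ⟨hsle, havoid⟩ := h2 n rfl
      rw [hcomp0 t] at havoid
      simp only at havoid
      unfold SLeq at hsle
      rw [hγ]
      linarith
    have geom : ∀ t, (bob (Nat.pair 0 t)).2 ≤ γ ^ t * (bob (Nat.pair 0 0)).2 := by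
      intro t
      induction t with
      | zero => simp
      | succ t ih =>
        have h1 : Nat.pair 0 t + 1 ≤ Nat.pair 0 (t + 1) :=
          Nat.pair_lt_pair_right 0 (Nat.lt_succ_self t)
        calc (bob (Nat.pair 0 (t + 1))).2 ≤ (bob (Nat.pair 0 t + 1)).2 := rmono h1
          _ ≤ γ * (bob (Nat.pair 0 t)).2 := contract t
          _ ≤ γ * (γ ^ t * (bob (Nat.pair 0 0)).2) := by
              exact mul_le_mul_of_nonneg_left ih hγ0
          _ = γ ^ (t + 1) * (bob (Nat.pair 0 0)).2 := by ring
    have rsmall : ∀ ε > (0 : ℝ), ∃ N, ∀ n ≥ N, (bob n).2 < ε := by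
      intro ε hε
      obtain ⟨t, ht⟩ :=
        exists_pow_lt_of_lt_one (div_pos hε (rpos (Nat.pair 0 0))) hγ1
      refine ⟨Nat.pair 0 t, fun n hn => ?_⟩
      have h1 := rmono hn
      have h2 := geom t
      have h3 : γ ^ t * (bob (Nat.pair 0 0)).2 < ε :=
        (lt_div_iff₀ (rpos (Nat.pair 0 0))).mp ht
      linarith
    have rlim : Filter.Tendsto (fun n => (bob n).2) Filter.atTop (nhds 0) := by
      rw [Metric.tendsto_atTop]
      intro ε hε
      obtain ⟨N, hN⟩ := rsmall ε hε
      refine ⟨N, fun n hn => ?_⟩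
      rw [Real.dist_eq, sub_zero, abs_of_pos (rpos n)]
      exact hN n hn
    have cauchy : CauchySeq (fun n => (bob n).1) := by
      apply cauchySeq_of_le_tendsto_0 (fun n => 2 * (bob n).2)
      · intro n m N hn hm
        calc dist (bob n).1 (bob m).1
            ≤ dist (bob N).1 (bob n).1 + dist (bob N).1 (bob m).1 :=
              dist_triangle_left _ _ _
          _ ≤ (bob N).2 + (bob N).2 := add_le_add (distball hn) (distball hm)
          _ = 2 * (bob N).2 := by ring
      · simpa using rlim.const_mul (2 : ℝ)
    obtain ⟨p, hp⟩ := cauchySeq_tendsto_of_complete cauchy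
    have hpin : ∀ n, dist (bob n).1 p ≤ (bob n).2 := by
      intro n
      have hT : Filter.Tendsto (fun m => dist (bob n).1 (bob m).1) Filter.atTop
          (nhds (dist (bob n).1 p)) := Filter.Tendsto.dist tendsto_const_nhds hp
      apply le_of_tendsto hT
      filter_upwards [Filter.eventually_ge_atTop n] with m hm using distball hm
    have hpT : ∀ j, p ∈ T j := by
      intro j
      have hAll : ∀ m,
          BMMBobLegal (fun s => bob (Nat.pair (j + 1) s))
            (fun s => σs j ((List.range (s + 1)).map
              (fun u => bob (Nat.pair (j + 1) u)))) m :=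
        fun m => hsub j m (fun i _ => hleg i)
      obtain ⟨q, hq1, hq2⟩ := (hσs j (fun s => bob (Nat.pair (j + 1) s))).2 hAll
      have hq1' : ∀ s, dist q (bob (Nat.pair (j + 1) s)).1 ≤ (bob (Nat.pair (j + 1) s)).2 := by
        intro s
        have := Set.mem_iInter.mp hq1 s
        simpa [Metric.mem_closedBall] using this
      have hqp : q = p := by
        have key : ∀ ε > (0 : ℝ), dist q p < ε := by
          intro ε hε
          obtain ⟨N, hN⟩ := rsmall (ε / 2) (by linarith)
          set s := Nat.pair (j + 1) N with hs
          have hsN : N ≤ s := Nat.right_le_pair _ _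
          have h1 := hq1' N
          have h2 := hpin s
          have h3 : (bob s).2 < ε / 2 := hN s hsN
          calc dist q p ≤ dist q (bob s).1 + dist (bob s).1 p := dist_triangle _ _ _
            _ < ε := by rw [← hs] at h1; linarith
        by_contra h
        have hpos : 0 < dist q p := dist_pos.mpr h
        exact absurd (key _ hpos) (lt_irrefl _)
      rw [← hqp]
      exact hq2
    refine ⟨p, Set.mem_inter ?_ ?_⟩
    · exact Set.mem_iInter.mpr fun n =>
        Metric.mem_closedBall.mpr (by rw [dist_comm]; exact hpin n)
    · exact Set.mem_iInter.mpr hpT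
end

section
/- For all d ∈ ℕ and 0 < ε < 1, the set WA_d(ε) = {x ∈ ℝᵈ : L(x) ≤ ε} is β-BMS winning for β = (ε/3)^{d+1} ∈ (0, 1/2), where L is the Lagrange spectrum function. -/
open Filter

/-!
Statement 12: for `d ∈ ℕ` and `0 < ε < 1`, the set
`WA_d(ε) = {x ∈ ℝᵈ : L(x) ≤ ε}` (where `L` is the Lagrange spectrum function
`L(x) = liminf_{p/q ∈ ℚᵈ} q^{1+1/d} ‖x − p/q‖`) is `β`-BMS winning, with
`β = (ε/3)^{d+1} ∈ (0, 1/2)`.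

Rational points of `ℝᵈ` are indexed by vectors `v : Fin d → ℚ`; writing `v = p/q` in
lowest terms, the denominator `q` is the lcm of the coordinate denominators, and the
liminf over `p/q ∈ ℚᵈ` (along any enumeration of `ℚᵈ`) is the liminf along the cofinite
filter on `Fin d → ℚ`.
-/

/-- The lowest-terms denominator `q` of a rational vector `p/q ∈ ℚᵈ`. -/
def ratDen {d : ℕ} (v : Fin d → ℚ) : ℕ := Finset.univ.lcm fun i => (v i).den

/-- The point of `ℝᵈ` corresponding to a rational vector. -/
def ratPt {d : ℕ} (v : Fin d → ℚ) : Fin d → ℝ := fun i => (v i : ℝ)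

/-- The Lagrange spectrum function `L(x) = liminf_{p/q ∈ ℚᵈ} q^{1+1/d} ‖x − p/q‖`,
computed along the cofinite filter (equivalently, along any enumeration of `ℚᵈ`). -/
noncomputable def lagrange {d : ℕ} (x : Fin d → ℝ) : ℝ :=
  liminf (fun v : Fin d → ℚ =>
    (ratDen v : ℝ) ^ ((1 : ℝ) + 1 / d) * ‖x - ratPt v‖) cofinite

set_option maxHeartbeats 1000000

namespace WABMS


lemma ratDen_pos {d : ℕ} (v : Fin d → ℚ) : 0 < ratDen v := by
  rw [Nat.pos_iff_ne_zero]
  intro h0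
  rw [ratDen, Finset.lcm_eq_zero_iff] at h0
  obtain ⟨i, _, hi⟩ := h0
  exact (v i).den_nz hi

lemma den_le_ratDen {d : ℕ} (v : Fin d → ℚ) (i : Fin d) : (v i).den ≤ ratDen v :=
  Nat.le_of_dvd (ratDen_pos v) (Finset.dvd_lcm (Finset.mem_univ i))

lemma one_le_ratDen {d : ℕ} (v : Fin d → ℚ) : (1:ℝ) ≤ (ratDen v : ℝ) := by
  exact_mod_cast ratDen_pos v

lemma rat_sep {p q : ℚ} (h : p ≠ q) :
    1 / ((p.den : ℝ) * (q.den : ℝ)) ≤ |(p : ℝ) - (q : ℝ)| := by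
  have hp : ((p.den : ℚ)) ≠ 0 := by exact_mod_cast p.den_nz
  have hq : ((q.den : ℚ)) ≠ 0 := by exact_mod_cast q.den_nz
  have key : (p - q) * ((p.den : ℚ) * (q.den : ℚ))
      = ((p.num * q.den - q.num * p.den : ℤ) : ℚ) := by
    have e : (p - q) * ((p.den : ℚ) * (q.den : ℚ))
        = (p * (p.den:ℚ)) * (q.den:ℚ) - (q * (q.den:ℚ)) * (p.den:ℚ) := by ring
    rw [e, Rat.mul_den_eq_num, Rat.mul_den_eq_num]
    push_cast
    ring
  have hne : (p.num * q.den - q.num * p.den : ℤ) ≠ 0 := by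
    intro h0
    apply h
    have : (p - q) * ((p.den : ℚ) * (q.den : ℚ)) = 0 := by rw [key, h0]; norm_num
    rcases mul_eq_zero.mp this with h1 | h1
    · exact sub_eq_zero.mp h1
    · exact absurd h1 (mul_ne_zero hp hq)
  have hint : (1:ℝ) ≤ |((p.num * q.den - q.num * p.den : ℤ) : ℝ)| := by
    rw [← Int.cast_abs]
    exact_mod_cast Int.one_le_abs hne
  have keyR : ((p:ℝ) - q) * ((p.den : ℝ) * (q.den : ℝ))
      = ((p.num * q.den - q.num * p.den : ℤ) : ℝ) := by exact_mod_cast key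
  have hdpos : (0:ℝ) < (p.den : ℝ) * (q.den : ℝ) := by
    have h1 : (0:ℝ) < (p.den : ℝ) := by exact_mod_cast p.pos
    have h2 : (0:ℝ) < (q.den : ℝ) := by exact_mod_cast q.pos
    exact mul_pos h1 h2
  rw [div_le_iff₀ hdpos]
  calc (1:ℝ) ≤ |((p.num * q.den - q.num * p.den : ℤ) : ℝ)| := hint
    _ = |((p:ℝ) - q)| * ((p.den : ℝ) * (q.den : ℝ)) := by
        rw [← keyR, abs_mul, abs_of_pos hdpos]

lemma pt_sep {d : ℕ} {v w : Fin d → ℚ} (h : v ≠ w) :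
    1 / ((ratDen v : ℝ) * (ratDen w : ℝ)) ≤ ‖ratPt v - ratPt w‖ := by
  obtain ⟨i, hi⟩ := Function.ne_iff.mp h
  have h1 : 1 / ((ratDen v : ℝ) * (ratDen w : ℝ))
      ≤ 1 / (((v i).den : ℝ) * ((w i).den : ℝ)) := by
    apply one_div_le_one_div_of_le
    · have h1 : (0:ℝ) < ((v i).den : ℝ) := by exact_mod_cast (v i).pos
      have h2 : (0:ℝ) < ((w i).den : ℝ) := by exact_mod_cast (w i).pos
      exact mul_pos h1 h2
    · apply mul_le_mul
      · exact_mod_cast den_le_ratDen v i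
      · exact_mod_cast den_le_ratDen w i
      · positivity
      · positivity
  refine h1.trans ((rat_sep hi).trans ?_)
  have := norm_le_pi_norm (ratPt v - ratPt w) i
  simpa [ratPt, Real.norm_eq_abs] using this

lemma ratPt_inj {d : ℕ} : Function.Injective (ratPt (d := d)) := by
  intro a b h
  funext i
  have := congrFun h i
  simp only [ratPt] at this
  exact_mod_cast this


lemma rat_bounded_finite (D M x : ℝ) :
    {c : ℚ | (c.den : ℝ) ≤ D ∧ |(c : ℝ) - x| ≤ M}.Finite := by
  apply Set.Finite.subset (((Set.finite_Icc (-(⌈(|x| + M) * D⌉)) ⌈(|x| + M) * D⌉).prod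
      (Set.finite_Icc (0:ℕ) ⌊D⌋₊)).image (fun p : ℤ × ℕ => (p.1 : ℚ) / (p.2 : ℚ)))
  rintro c ⟨hden, hclose⟩
  have hcabs : |(c:ℝ)| ≤ |x| + M := by
    have := abs_sub_abs_le_abs_sub (c:ℝ) x
    linarith
  have hdpos : (0:ℝ) < (c.den : ℝ) := by exact_mod_cast c.pos
  have hnum : |(c.num : ℝ)| ≤ (|x| + M) * D := by
    have e : |(c.num : ℝ)| = |(c:ℝ)| * (c.den : ℝ) := by
      rw [Rat.cast_def, abs_div, abs_of_pos hdpos, div_mul_cancel₀ _ hdpos.ne']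
    rw [e]
    apply mul_le_mul hcabs hden hdpos.le
    exact le_trans (abs_nonneg _) hcabs
  refine ⟨(c.num, c.den), ⟨?_, ?_⟩, ?_⟩
  · rw [Set.mem_Icc]
    constructor
    · have h1 : -((|x| + M) * D) ≤ (c.num : ℝ) := by
        have := neg_abs_le (c.num : ℝ); linarith
      have h2 : ((-(⌈(|x| + M) * D⌉) : ℤ) : ℝ) ≤ (c.num : ℝ) := by
        push_cast
        have := Int.le_ceil ((|x| + M) * D)
        linarith
      exact_mod_cast h2
    · have h1 : (c.num : ℝ) ≤ (|x| + M) * D := (le_abs_self _).trans hnum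
      have h2 : (c.num : ℝ) ≤ ((⌈(|x| + M) * D⌉ : ℤ) : ℝ) :=
        h1.trans (Int.le_ceil _)
      exact_mod_cast h2
  · rw [Set.mem_Icc]
    exact ⟨Nat.zero_le _, Nat.le_floor hden⟩
  · simp [Rat.num_div_den]

lemma finite_fle {d : ℕ} (hd : 0 < d) (w : Fin d → ℚ) (a : ℝ) (ha : 0 < a) :
    {v : Fin d → ℚ |
      (ratDen v : ℝ) ^ ((1:ℝ) + 1/d) * ‖ratPt w - ratPt v‖ ≤ a}.Finite := by
  have hd0 : (d:ℝ) ≠ 0 := Nat.cast_ne_zero.mpr hd.ne'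
  set B := (a * (ratDen w : ℝ))^d with hB
  apply Set.Finite.subset (Set.Finite.union (Set.finite_singleton w)
    (Set.Finite.pi (fun i => rat_bounded_finite B a ((w i : ℝ)))))
  intro v hv
  simp only [Set.mem_setOf_eq] at hv
  rcases eq_or_ne v w with rfl | hne
  · exact Or.inl rfl
  right
  rw [Set.mem_univ_pi]
  have hqv : (0:ℝ) < (ratDen v : ℝ) := by exact_mod_cast ratDen_pos v
  have hqw : (0:ℝ) < (ratDen w : ℝ) := by exact_mod_cast ratDen_pos w
  have h1 : (1:ℝ) ≤ (ratDen v : ℝ) ^ ((1:ℝ) + 1/d) := by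
    calc (1:ℝ) = (1:ℝ) ^ ((1:ℝ) + 1/d) := (Real.one_rpow _).symm
      _ ≤ (ratDen v : ℝ) ^ ((1:ℝ) + 1/d) :=
        Real.rpow_le_rpow zero_le_one (one_le_ratDen v) (by positivity)
  have hnorm : ‖ratPt w - ratPt v‖ ≤ a := by
    nlinarith [norm_nonneg (ratPt w - ratPt v)]
  -- denominator bound
  have hsep : 1 / ((ratDen v : ℝ) * (ratDen w : ℝ)) ≤ ‖ratPt w - ratPt v‖ := by
    rw [norm_sub_rev]; exact pt_sep hne
  have h2 : (ratDen v : ℝ) ^ ((1:ℝ) + 1/d) * (1 / ((ratDen v : ℝ) * (ratDen w : ℝ))) ≤ a :=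
    le_trans (mul_le_mul_of_nonneg_left hsep (by positivity)) hv
  have hqe : (ratDen v : ℝ) ^ ((1:ℝ) + 1/d)
      = (ratDen v : ℝ) * (ratDen v : ℝ) ^ ((1:ℝ)/d) := by
    rw [Real.rpow_add hqv, Real.rpow_one]
  have h3 : (ratDen v : ℝ) ^ ((1:ℝ)/d) ≤ a * (ratDen w : ℝ) := by
    rw [hqe, mul_one_div, div_le_iff₀ (by positivity)] at h2
    have := h2
    nlinarith
  have h4 : (ratDen v : ℝ) ≤ B := by
    have h5 : ((ratDen v : ℝ) ^ ((1:ℝ)/d)) ^ (d:ℕ) ≤ (a * (ratDen w : ℝ))^(d:ℕ) :=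
      pow_le_pow_left₀ (by positivity) h3 d
    rwa [one_div, Real.rpow_inv_natCast_pow hqv.le hd.ne'] at h5
  intro i
  constructor
  · calc ((v i).den : ℝ) ≤ (ratDen v : ℝ) := by exact_mod_cast den_le_ratDen v i
      _ ≤ B := h4
  · have := norm_le_pi_norm (ratPt w - ratPt v) i
    simp only [Pi.sub_apply, ratPt, Real.norm_eq_abs] at this
    rw [abs_sub_comm]
    exact le_trans this hnorm

lemma lagrange_rat {d : ℕ} (hd : 0 < d) (w : Fin d → ℚ) : lagrange (ratPt w) = 0 := by
  rw [lagrange, liminf_eq]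
  apply Real.sSup_of_not_bddAbove
  rintro ⟨M, hM⟩
  have hmem : (max M 0 + 1) ∈ {a : ℝ | ∀ᶠ (v : Fin d → ℚ) in cofinite,
      a ≤ (ratDen v : ℝ) ^ ((1:ℝ) + 1/d) * ‖ratPt w - ratPt v‖} := by
    rw [Set.mem_setOf_eq, eventually_cofinite]
    apply Set.Finite.subset (finite_fle hd w (max M 0 + 1) (by positivity))
    intro v hv
    simp only [Set.mem_setOf_eq, not_le] at hv
    exact le_of_lt hv
  have := hM hmem
  have h2 : M ≤ max M 0 := le_max_left M 0
  linarith

lemma dirichlet_aux {d : ℕ} (x : Fin d → ℝ) (N : ℕ) (hN : 0 < N)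
    (a b : ℕ) (hab : a < b) (hbN : b < N ^ d + 1)
    (hg : (fun i => ⌊Int.fract ((a : ℝ) * x i) * N⌋₊)
        = (fun i => ⌊Int.fract ((b : ℝ) * x i) * N⌋₊)) :
    ∃ (Q : ℕ) (p : Fin d → ℤ), 0 < Q ∧ Q ≤ N ^ d ∧
      ∀ i, |(Q : ℝ) * x i - (p i : ℝ)| ≤ 1 / N := by
  have hNR : (0:ℝ) < N := by exact_mod_cast hN
  refine ⟨b - a, fun i => ⌊(b:ℝ) * x i⌋ - ⌊(a:ℝ) * x i⌋, by omega, by omega, ?_⟩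
  intro i
  have hcast : ((b - a : ℕ) : ℝ) = (b:ℝ) - (a:ℝ) := by
    push_cast [Nat.cast_sub hab.le]; ring
  set fa := Int.fract ((a : ℝ) * x i) with hfa
  set fb := Int.fract ((b : ℝ) * x i) with hfb
  have heq : ((b - a : ℕ) : ℝ) * x i - ((⌊(b:ℝ) * x i⌋ - ⌊(a:ℝ) * x i⌋ : ℤ) : ℝ)
      = fb - fa := by
    rw [hcast, hfa, hfb]
    push_cast
    simp only [Int.fract]
    ring
  rw [heq]
  have hk := congrFun hg i
  have h1 : (⌊fa * N⌋₊ : ℝ) ≤ fa * N :=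
    Nat.floor_le (mul_nonneg (Int.fract_nonneg _) hNR.le)
  have h2 : fa * N < ⌊fa * N⌋₊ + 1 := Nat.lt_floor_add_one _
  have h3 : (⌊fb * N⌋₊ : ℝ) ≤ fb * N :=
    Nat.floor_le (mul_nonneg (Int.fract_nonneg _) hNR.le)
  have h4 : fb * N < ⌊fb * N⌋₊ + 1 := Nat.lt_floor_add_one _
  rw [← hk] at h3 h4
  rw [abs_le]
  constructor
  · rw [neg_le, neg_sub, le_div_iff₀ hNR, sub_mul]
    linarith
  · rw [le_div_iff₀ hNR, sub_mul]
    linarith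

lemma dirichlet {d : ℕ} (x : Fin d → ℝ) (N : ℕ) (hN : 0 < N) :
    ∃ (Q : ℕ) (p : Fin d → ℤ), 0 < Q ∧ Q ≤ N ^ d ∧
      ∀ i, |(Q : ℝ) * x i - (p i : ℝ)| ≤ 1 / N := by
  have hmaps : ∀ q ∈ Finset.range (N ^ d + 1),
      (fun i => ⌊Int.fract ((q : ℝ) * x i) * N⌋₊) ∈
        Fintype.piFinset (fun _ : Fin d => Finset.range N) := by
    intro q _
    rw [Fintype.mem_piFinset]
    intro i
    rw [Finset.mem_range]
    have h0 : 0 ≤ Int.fract ((q:ℝ) * x i) := Int.fract_nonneg _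
    have h1 : Int.fract ((q:ℝ) * x i) < 1 := Int.fract_lt_one _
    have hNR : (0:ℝ) < N := by exact_mod_cast hN
    have : Int.fract ((q:ℝ) * x i) * N < N := by nlinarith
    exact Nat.floor_lt (by positivity) |>.mpr this
  have hcard : (Fintype.piFinset (fun _ : Fin d => Finset.range N)).card
      < (Finset.range (N ^ d + 1)).card := by
    rw [Finset.card_range, Fintype.card_piFinset]
    simp
  obtain ⟨a, ha, b, hb, hab, hgab⟩ :=
    Finset.exists_ne_map_eq_of_card_lt_of_maps_to hcard hmaps
  rw [Finset.mem_range] at ha hb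
  rcases hab.lt_or_gt with h | h
  · exact dirichlet_aux x N hN a b h hb hgab
  · exact dirichlet_aux x N hN b a h ha hgab.symm


/-- Alice's target configuration: a center `y` within reach, whose Alice-ball is
contained in the `ε`-danger zone of some rational point `v` that is moreover close
to `x` at scale `r^(1/(d+1))`. -/
def Good (d : ℕ) (ε : ℝ) (x : Fin d → ℝ) (r : ℝ) (y : Fin d → ℝ) : Prop :=
  dist y x ≤ (1 - (ε/3)^(d+1)) * r ∧
  ∃ v : Fin d → ℚ, dist (ratPt v) x ≤ r ^ (1/((d:ℝ)+1)) ∧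
    ∀ z : Fin d → ℝ, dist z y ≤ (ε/3)^(d+1) * r →
      (ratDen v : ℝ) ^ ((1:ℝ) + 1/d) * ‖z - ratPt v‖ ≤ ε

lemma beta_le_ninth {d : ℕ} (hd : 0 < d) {ε : ℝ} (hε : 0 < ε) (hε1 : ε < 1) :
    (ε/3)^(d+1) ≤ 1/9 := by
  calc (ε/3)^(d+1) ≤ (1/3:ℝ)^(d+1) := by
        apply pow_le_pow_left₀ (by positivity) (by linarith)
    _ ≤ (1/3:ℝ)^2 := pow_le_pow_of_le_one (by norm_num) (by norm_num) (by omega)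
    _ ≤ 1/9 := by norm_num

lemma swallow {d : ℕ} (hd : 0 < d) {ε : ℝ} (hε : 0 < ε) (hε1 : ε < 1)
    (x : Fin d → ℝ) {r : ℝ} (hr : 0 < r) (hr1 : r ≤ 1) :
    ∃ y, Good d ε x r y := by
  have hd0 : (d:ℝ) ≠ 0 := Nat.cast_ne_zero.mpr hd.ne'
  have hdd : (d + 1 : ℕ) ≠ 0 := by omega
  set β : ℝ := (ε/3)^(d+1) with hβdef
  have hβpos : 0 < β := by positivity
  have hβ9 : β ≤ 1/9 := beta_le_ninth hd hε hε1
  have h2β : 0 < 1 - 2*β := by linarith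
  have h1β : 0 < 1 - β := by linarith
  have hKey : 2^(d+1) * β ≤ ε^(d+1) * (1 - 2*β) := by
    have h23 : ((2:ℝ)/3)^(d+1) ≤ 4/9 := by
      calc ((2:ℝ)/3)^(d+1) ≤ ((2:ℝ)/3)^2 :=
            pow_le_pow_of_le_one (by norm_num) (by norm_num) (by omega)
        _ ≤ 4/9 := by norm_num
    have e1 : (2:ℝ)^(d+1) * β = ε^(d+1) * ((2:ℝ)/3)^(d+1) := by
      rw [hβdef, ← mul_pow, ← mul_pow]
      congr 1
      ring
    rw [e1]
    apply mul_le_mul_of_nonneg_left _ (by positivity)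
    linarith
  -- choice of N
  set s : ℝ := ε^d * (1 - 2*β) * r with hsdef
  have hs : 0 < s := by positivity
  have hεd1 : ε^d ≤ 1 := pow_le_one₀ hε.le hε1.le
  have hfac : ε^d * (1 - 2*β) ≤ 1 := by nlinarith [pow_nonneg hε.le d]
  have hs1 : s ≤ r := by
    calc s = (ε^d * (1 - 2*β)) * r := by rw [hsdef]
      _ ≤ 1 * r := mul_le_mul_of_nonneg_right hfac hr.le
      _ = r := one_mul r
  have hsr1 : s ≤ 1 := hs1.trans hr1
  have hA1 : (1:ℝ) ≤ (s⁻¹) ^ (1/((d:ℝ)+1)) := by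
    calc (1:ℝ) = (1:ℝ) ^ (1/((d:ℝ)+1)) := (Real.one_rpow _).symm
      _ ≤ (s⁻¹) ^ (1/((d:ℝ)+1)) := by
          apply Real.rpow_le_rpow zero_le_one (one_le_inv_iff₀.mpr ⟨hs, hsr1⟩) (by positivity)
  set N : ℕ := ⌈(s⁻¹) ^ (1/((d:ℝ)+1))⌉₊ with hNdef
  have hN0 : 0 < N := Nat.ceil_pos.mpr (lt_of_lt_of_le one_pos hA1)
  have hNR : (0:ℝ) < N := by exact_mod_cast hN0
  have hcastexp : 1/((d:ℝ)+1) = (((d+1:ℕ)):ℝ)⁻¹ := by push_cast; rw [one_div]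
  have hsA : ((s⁻¹) ^ (1/((d:ℝ)+1))) ^ (d+1 : ℕ) = s⁻¹ := by
    rw [hcastexp, Real.rpow_inv_natCast_pow (by positivity) hdd]
  have hNA : (s⁻¹) ^ (1/((d:ℝ)+1)) ≤ (N:ℝ) := Nat.le_ceil _
  have hNA2 : (N:ℝ) ≤ 2 * (s⁻¹) ^ (1/((d:ℝ)+1)) := by
    have := Nat.ceil_lt_add_one (le_trans zero_le_one hA1)
    have h := hA1
    simp only [← hNdef] at this
    linarith
  have hT1 : s⁻¹ ≤ (N:ℝ)^(d+1) := by
    rw [← hsA]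
    exact pow_le_pow_left₀ (by positivity) hNA _
  have hT2 : (N:ℝ)^(d+1) ≤ 2^(d+1) * s⁻¹ := by
    calc (N:ℝ)^(d+1) ≤ (2 * (s⁻¹) ^ (1/((d:ℝ)+1)))^(d+1) :=
          pow_le_pow_left₀ (by positivity) hNA2 _
      _ = 2^(d+1) * ((s⁻¹) ^ (1/((d:ℝ)+1)))^(d+1) := mul_pow _ _ _
      _ = 2^(d+1) * s⁻¹ := by rw [hsA]
  -- the two numeric conditions
  have h1s : (1:ℝ) ≤ s * (N:ℝ)^(d+1) := by
    calc (1:ℝ) = s * s⁻¹ := (mul_inv_cancel₀ hs.ne').symm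
      _ ≤ s * (N:ℝ)^(d+1) := mul_le_mul_of_nonneg_left hT1 hs.le
  have hC : 1/(ε^d * (N:ℝ)^(d+1)) ≤ (1 - 2*β) * r := by
    rw [div_le_iff₀ (by positivity)]
    calc (1:ℝ) ≤ s * (N:ℝ)^(d+1) := h1s
      _ = (1 - 2*β) * r * (ε^d * (N:ℝ)^(d+1)) := by rw [hsdef]; ring
  have hB : β * r * (N:ℝ)^(d+1) ≤ ε := by
    have e1 : β * r * (N:ℝ)^(d+1) ≤ β * r * (2^(d+1) * s⁻¹) :=
      mul_le_mul_of_nonneg_left hT2 (by positivity)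
    have e2 : β * r * (2^(d+1) * s⁻¹) = 2^(d+1) * β / (ε^d * (1 - 2*β)) := by
      rw [hsdef]
      field_simp
    have e3 : 2^(d+1) * β / (ε^d * (1 - 2*β)) ≤ ε := by
      rw [div_le_iff₀ (by positivity)]
      calc 2^(d+1) * β ≤ ε^(d+1) * (1 - 2*β) := hKey
        _ = ε * (ε^d * (1 - 2*β)) := by ring
    linarith
  -- Dirichlet
  obtain ⟨Q, p, hQ0, hQN, happ⟩ := dirichlet x N hN0
  have hQR : (0:ℝ) < Q := by exact_mod_cast hQ0
  set v : Fin d → ℚ := fun i => (p i : ℚ) / (Q : ℚ) with hvdef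
  set V : Fin d → ℝ := ratPt v with hVdef
  have hVi : ∀ i, V i = (p i : ℝ) / (Q : ℝ) := by
    intro i
    rw [hVdef, ratPt, hvdef]
    push_cast
    ring
  have hdistVx : dist V x ≤ 1/((N:ℝ)*Q) := by
    rw [dist_pi_le_iff (by positivity)]
    intro i
    rw [Real.dist_eq]
    have e : V i - x i = -(((Q:ℝ) * x i - p i)/Q) := by
      rw [hVi i]; field_simp; ring
    rw [e, abs_neg, abs_div, abs_of_pos hQR, ← div_div]
    gcongr
    exact happ i
  have hden_dvd : ratDen v ∣ Q := by
    apply Finset.lcm_dvd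
    intro i _
    have h1 : ((v i).den : ℤ) ∣ (Q : ℤ) := by
      have e : v i = Rat.divInt (p i) (Q : ℤ) := by
        rw [hvdef, Rat.divInt_eq_div]
        push_cast
        ring
      rw [e]
      exact Rat.den_dvd _ _
    exact_mod_cast h1
  have hdenQ : ratDen v ≤ Q := Nat.le_of_dvd hQ0 hden_dvd
  have hdpos : (0:ℝ) < (ratDen v : ℝ) := by exact_mod_cast ratDen_pos v
  -- distance of V to x at scale r^(1/(d+1))
  have hVx2 : dist V x ≤ r ^ (1/((d:ℝ)+1)) := by
    have st1 : 1/((N:ℝ)*Q) ≤ 1/(N:ℝ) := by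
      apply one_div_le_one_div_of_le hNR
      have hQ1 : (1:ℝ) ≤ (Q:ℝ) := by exact_mod_cast hQ0
      nlinarith [hNR]
    have st2 : 1/(N:ℝ) ≤ s ^ (1/((d:ℝ)+1)) := by
      rw [div_le_iff₀ hNR]
      have e1 : (s⁻¹) ^ (1/((d:ℝ)+1)) = (s ^ (1/((d:ℝ)+1)))⁻¹ := Real.inv_rpow hs.le _
      have e2 : (0:ℝ) < s ^ (1/((d:ℝ)+1)) := Real.rpow_pos_of_pos hs _
      calc (1:ℝ) = s ^ (1/((d:ℝ)+1)) * (s ^ (1/((d:ℝ)+1)))⁻¹ := (mul_inv_cancel₀ e2.ne').symm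
        _ ≤ s ^ (1/((d:ℝ)+1)) * (N:ℝ) := by
            apply mul_le_mul_of_nonneg_left _ e2.le
            rw [← e1]
            exact hNA
    have st3 : s ^ (1/((d:ℝ)+1)) ≤ r ^ (1/((d:ℝ)+1)) :=
      Real.rpow_le_rpow hs.le hs1 (by positivity)
    exact hdistVx.trans (st1.trans (st2.trans st3))
  -- rpow bound : Q^(1+1/d) ≤ N^(d+1)
  have hQpow : (Q:ℝ) ^ ((1:ℝ) + 1/d) ≤ (N:ℝ)^(d+1) := by
    have s1 : (Q:ℝ) ^ ((1:ℝ) + 1/d) ≤ ((N:ℝ)^(d:ℕ)) ^ ((1:ℝ) + 1/d) := by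
      apply Real.rpow_le_rpow hQR.le _ (by positivity)
      exact_mod_cast hQN
    have s2 : ((N:ℝ)^(d:ℕ)) ^ ((1:ℝ) + 1/d) = (N:ℝ)^(d+1) := by
      rw [← Real.rpow_natCast (N:ℝ) d, ← Real.rpow_mul hNR.le]
      have e : (d:ℝ) * ((1:ℝ) + 1/d) = ((d+1 : ℕ) : ℝ) := by
        push_cast
        field_simp
      rw [e, Real.rpow_natCast]
    rw [s2] at s1
    exact s1
  have hrD : (ratDen v : ℝ) ^ ((1:ℝ) + 1/d) ≤ (Q:ℝ) ^ ((1:ℝ) + 1/d) := by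
    apply Real.rpow_le_rpow hdpos.le _ (by positivity)
    exact_mod_cast hdenQ
  -- case split
  by_cases hcase : dist V x ≤ (1 - β) * r
  · refine ⟨V, hcase, v, hVx2, ?_⟩
    intro z hz
    rw [← hVdef]
    calc (ratDen v : ℝ) ^ ((1:ℝ) + 1/d) * ‖z - V‖
        ≤ (N:ℝ)^(d+1) * (β * r) := by
          apply mul_le_mul (hrD.trans hQpow) _ (norm_nonneg _) (by positivity)
          rw [← dist_eq_norm]
          exact hz
      _ = β * r * (N:ℝ)^(d+1) := by ring
      _ ≤ ε := hB
  · push_neg at hcase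
    have hD0 : 0 < dist V x := lt_trans (by positivity) hcase
    set D := dist V x with hDdef
    set c : ℝ := (1 - β) * r / D with hcdef
    have hc0 : 0 ≤ c := by positivity
    have hc1 : c ≤ 1 := by
      rw [hcdef, div_le_one hD0]
      exact hcase.le
    set y : Fin d → ℝ := x + c • (V - x) with hydef
    have hyx : dist y x = (1 - β) * r := by
      rw [dist_eq_norm]
      have e : y - x = c • (V - x) := by rw [hydef]; abel
      rw [e, norm_smul, Real.norm_eq_abs, abs_of_nonneg hc0, ← dist_eq_norm, ← hDdef,
        hcdef, div_mul_cancel₀ _ hD0.ne']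
    have hyV : dist y V = D - (1 - β) * r := by
      rw [dist_comm, dist_eq_norm]
      have e : V - y = (1 - c) • (V - x) := by
        rw [hydef, sub_smul, one_smul]
        abel
      rw [e, norm_smul, Real.norm_eq_abs, abs_of_nonneg (by linarith), ← dist_eq_norm,
        ← hDdef, hcdef]
      field_simp
    -- Q is small: otherwise contradiction
    have hQsmall : (Q:ℝ) ≤ ε^d * (N:ℝ)^(d:ℕ) := by
      by_contra hq
      push_neg at hq
      have e1 : 1/((N:ℝ)*Q) < 1/((N:ℝ) * (ε^d * (N:ℝ)^(d:ℕ))) := by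
        apply one_div_lt_one_div_of_lt (by positivity)
        apply mul_lt_mul_of_pos_left hq hNR
      have e2 : (N:ℝ) * (ε^d * (N:ℝ)^(d:ℕ)) = ε^d * (N:ℝ)^(d+1) := by ring
      rw [e2] at e1
      have e3 : D < (1 - 2*β) * r := lt_of_le_of_lt hdistVx (lt_of_lt_of_le e1 hC)
      have e4 : (1 - 2*β) * r ≤ (1 - β) * r := by nlinarith
      linarith
    have hQd : (Q:ℝ) ^ ((1:ℝ)/d) ≤ ε * N := by
      have s1 : (Q:ℝ) ^ ((1:ℝ)/d) ≤ ((ε * N)^(d:ℕ)) ^ ((1:ℝ)/d) := by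
        apply Real.rpow_le_rpow hQR.le _ (by positivity)
        rw [mul_pow]
        exact hQsmall
      rw [one_div]
      rwa [one_div, Real.pow_rpow_inv_natCast (by positivity) hd.ne'] at s1
    have hQe : (Q:ℝ) ^ ((1:ℝ) + 1/d) = Q * (Q:ℝ) ^ ((1:ℝ)/d) := by
      rw [Real.rpow_add hQR, Real.rpow_one]
    refine ⟨y, le_of_eq hyx, v, hVx2, ?_⟩
    intro z hz
    rw [← hVdef]
    have hzV : ‖z - V‖ ≤ D := by
      rw [← dist_eq_norm]
      calc dist z V ≤ dist z y + dist y V := dist_triangle z y V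
        _ ≤ β * r + (D - (1 - β) * r) := by
            apply add_le_add hz (le_of_eq hyV)
        _ ≤ D := by nlinarith
    calc (ratDen v : ℝ) ^ ((1:ℝ) + 1/d) * ‖z - V‖
        ≤ (Q:ℝ) ^ ((1:ℝ) + 1/d) * ‖z - V‖ :=
          mul_le_mul_of_nonneg_right hrD (norm_nonneg _)
      _ ≤ (Q:ℝ) ^ ((1:ℝ) + 1/d) * D :=
          mul_le_mul_of_nonneg_left hzV (by positivity)
      _ ≤ (Q:ℝ) ^ ((1:ℝ) + 1/d) * (1/((N:ℝ)*Q)) :=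
          mul_le_mul_of_nonneg_left hdistVx (by positivity)
      _ = (Q:ℝ) ^ ((1:ℝ)/d) / N := by
          rw [hQe]
          field_simp
      _ ≤ (ε * N) / N := by
          gcongr
      _ = ε := by field_simp

open scoped Classical in
noncomputable def amove (d : ℕ) (ε : ℝ) (b : (Fin d → ℝ) × ℝ) : (Fin d → ℝ) × ℝ :=
  if h : ∃ y, Good d ε b.1 b.2 y then (h.choose, (ε/3)^(d+1) * b.2)
  else (b.1, (ε/3)^(d+1) * b.2)

lemma amove_snd (d : ℕ) (ε : ℝ) (b : (Fin d → ℝ) × ℝ) :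
    (amove d ε b).2 = (ε/3)^(d+1) * b.2 := by
  unfold amove
  split <;> rfl

lemma amove_dist (d : ℕ) {ε : ℝ} (b : (Fin d → ℝ) × ℝ)
    (hβ1 : (ε/3)^(d+1) ≤ 1) (hb : 0 ≤ b.2) :
    dist (amove d ε b).1 b.1 ≤ (1 - (ε/3)^(d+1)) * b.2 := by
  unfold amove
  split
  case isTrue h => exact h.choose_spec.1
  case isFalse h =>
    simp only [dist_self]
    have : 0 ≤ 1 - (ε/3)^(d+1) := by linarith
    positivity

lemma amove_good (d : ℕ) (ε : ℝ) (b : (Fin d → ℝ) × ℝ)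
    (h : ∃ y, Good d ε b.1 b.2 y) : Good d ε b.1 b.2 (amove d ε b).1 := by
  unfold amove
  rw [dif_pos h]
  exact h.choose_spec

lemma amove_sleq (d : ℕ) {ε : ℝ} (b : (Fin d → ℝ) × ℝ)
    (hβ0 : 0 ≤ (ε/3)^(d+1)) (hβ1 : (ε/3)^(d+1) ≤ 1) (hb : 0 ≤ b.2) :
    SLeq (amove d ε b) b := by
  have h1 := amove_dist d b hβ1 hb
  have h2 := amove_snd d ε b
  rw [SLeq, h2, dist_comm]
  nlinarith

lemma sleq_subset {X : Type*} [MetricSpace X] {w₂ w₁ : X × ℝ} (h : SLeq w₂ w₁) :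
    Metric.closedBall w₂.1 w₂.2 ⊆ Metric.closedBall w₁.1 w₁.2 := by
  intro z hz
  rw [Metric.mem_closedBall] at *
  have := dist_triangle z w₂.1 w₁.1
  rw [SLeq] at h
  rw [dist_comm w₁.1 w₂.1] at h
  linarith

lemma lastmap {α : Type*} (bob : ℕ → α) (k : ℕ) (z : α) :
    ((List.range (k+1)).map bob).getLastD z = bob k := by
  rw [List.range_succ, List.map_append]
  simp

lemma rpow_small {d : ℕ} {r c : ℝ} (hc : 0 ≤ c) (hr0 : 0 ≤ r)
    (hr : r ≤ c ^ (d+1)) : r ^ (1/((d:ℝ)+1)) ≤ c := by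
  have hdd : (d + 1 : ℕ) ≠ 0 := by omega
  have hcast : 1/((d:ℝ)+1) = (((d+1:ℕ)):ℝ)⁻¹ := by push_cast; rw [one_div]
  calc r ^ (1/((d:ℝ)+1)) ≤ (c ^ (d+1)) ^ (1/((d:ℝ)+1)) :=
        Real.rpow_le_rpow hr0 hr (by positivity)
    _ = c := by rw [hcast, Real.pow_rpow_inv_natCast hc hdd]

end WABMS

open WABMS in
/-- **Theorem.** For all `d ≥ 1` and `0 < ε < 1`, the set
`WA_d(ε) = {x ∈ ℝᵈ : L(x) ≤ ε}` is `β`-BMS winning, where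
`β = (ε/3)^{d+1} ∈ (0, 1/2)`. -/
theorem wa_set_bms_winning (d : ℕ) (hd : 0 < d) (ε : ℝ) (hε : 0 < ε) (hε1 : ε < 1) :
    (ε / 3) ^ (d + 1) ∈ Set.Ioo (0 : ℝ) (1 / 2) ∧
      BMSWinning ((ε / 3) ^ (d + 1)) {x : Fin d → ℝ | lagrange x ≤ ε} := by
  have hβpos : (0:ℝ) < (ε/3)^(d+1) := by positivity
  have hβ9 : (ε/3)^(d+1) ≤ 1/9 := beta_le_ninth hd hε hε1
  refine ⟨⟨hβpos, by linarith⟩, ?_⟩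
  refine ⟨fun l => amove d ε (l.getLastD (0, 1)), fun bob => ?_⟩
  have hlast : ∀ k : ℕ,
      (fun l => amove d ε (l.getLastD ((0 : Fin d → ℝ), (1:ℝ))))
        ((List.range (k+1)).map bob) = amove d ε (bob k) := by
    intro k
    simp only [lastmap]
  constructor
  · -- Alice is always legal
    intro n hBob
    have hrn : 0 < (bob n).2 := (hBob n le_rfl).1
    constructor
    · rw [hlast n]
      exact amove_sleq d (bob n) hβpos.le (by linarith) hrn.le
    · rw [hlast n]
      exact amove_snd d ε (bob n)
  · -- Alice wins
    intro hBob
    have hr : ∀ n, 0 < (bob n).2 := fun n => (hBob n).1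
    have hS : ∀ n, SLeq (bob (n+1)) (amove d ε (bob n)) := by
      intro n
      have h := (hBob (n+1)).2 n rfl
      rwa [hlast n] at h
    have hAS : ∀ n, SLeq (amove d ε (bob n)) (bob n) := fun n =>
      amove_sleq d (bob n) hβpos.le (by linarith) (hr n).le
    have hshrink : ∀ n, (bob (n+1)).2 ≤ (ε/3)^(d+1) * (bob n).2 := by
      intro n
      have h := hS n
      rw [SLeq, amove_snd] at h
      have := dist_nonneg (x := (amove d ε (bob n)).1) (y := (bob (n+1)).1)
      linarith
    have hgeo : ∀ n, (bob n).2 ≤ ((ε/3)^(d+1))^n * (bob 0).2 := by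
      intro n
      induction n with
      | zero => simp
      | succ n ih =>
        calc (bob (n+1)).2 ≤ (ε/3)^(d+1) * (bob n).2 := hshrink n
          _ ≤ (ε/3)^(d+1) * (((ε/3)^(d+1))^n * (bob 0).2) :=
              mul_le_mul_of_nonneg_left ih hβpos.le
          _ = ((ε/3)^(d+1))^(n+1) * (bob 0).2 := by ring
    have hcenter : ∀ n, dist (bob n).1 (bob (n+1)).1 ≤ (bob n).2 := by
      intro n
      have h1 := hS n
      rw [SLeq, amove_snd] at h1
      have h2 := hAS n
      rw [SLeq] at h2
      rw [amove_snd] at h2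
      have h3 := dist_triangle (bob n).1 (amove d ε (bob n)).1 (bob (n+1)).1
      have h4 := (hr (n+1))
      linarith
    have hCauchy : CauchySeq (fun n => (bob n).1) := by
      apply cauchySeq_of_le_geometric ((ε/3)^(d+1)) ((bob 0).2) (by linarith)
      intro n
      calc dist ((bob n).1) ((bob (n+1)).1) ≤ (bob n).2 := hcenter n
        _ ≤ ((ε/3)^(d+1))^n * (bob 0).2 := hgeo n
        _ = (bob 0).2 * ((ε/3)^(d+1))^n := mul_comm _ _
    obtain ⟨xl, hxl⟩ := cauchySeq_tendsto_of_complete hCauchy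
    have hsub : ∀ n m, n ≤ m →
        Metric.closedBall (bob m).1 (bob m).2 ⊆ Metric.closedBall (bob n).1 (bob n).2 := by
      intro n m hnm
      induction m with
      | zero =>
        have : n = 0 := Nat.le_zero.mp hnm
        subst this
        exact subset_rfl
      | succ m ih =>
        rcases Nat.lt_or_ge n (m+1) with h | h
        · have hnm' : n ≤ m := by omega
          exact ((sleq_subset (hS m)).trans (sleq_subset (hAS m))).trans (ih hnm')
        · have : n = m + 1 := by omega
          subst this
          exact subset_rfl
    have hmemB : ∀ n, xl ∈ Metric.closedBall (bob n).1 (bob n).2 := by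
      intro n
      apply Metric.isClosed_closedBall.mem_of_tendsto hxl
      rw [Filter.eventually_atTop]
      exact ⟨n, fun m hm => hsub n m hm (Metric.mem_closedBall_self (hr m).le)⟩
    have hmemA : ∀ n, dist xl (amove d ε (bob n)).1 ≤ (ε/3)^(d+1) * (bob n).2 := by
      intro n
      have h1 : xl ∈ Metric.closedBall (amove d ε (bob n)).1 (amove d ε (bob n)).2 :=
        sleq_subset (hS n) (hmemB (n+1))
      rw [Metric.mem_closedBall, amove_snd] at h1
      exact h1
    have hrt : Tendsto (fun n => (bob n).2) atTop (nhds 0) := by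
      apply squeeze_zero (fun n => (hr n).le) hgeo
      have h1 : Tendsto (fun n : ℕ => ((ε/3)^(d+1))^n) atTop (nhds 0) :=
        tendsto_pow_atTop_nhds_zero_of_lt_one hβpos.le (by linarith)
      have h2 := h1.mul_const ((bob 0).2)
      simpa using h2
    -- key extraction: arbitrarily close good rationals
    have hkey : ∀ δ : ℝ, 0 < δ → ∃ v : Fin d → ℚ,
        (ratDen v : ℝ) ^ ((1:ℝ) + 1/d) * ‖xl - ratPt v‖ ≤ ε ∧
          dist (ratPt v) xl < δ := by
      intro δ hδ
      have hc0 : 0 < min 1 (min (δ/3) ((δ/3)^(d+1))) := by positivity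
      obtain ⟨n, hn⟩ := (hrt.eventually (gt_mem_nhds hc0)).exists
      have hrn1 : (bob n).2 ≤ 1 := le_trans hn.le (min_le_left _ _)
      have hrnd : (bob n).2 ≤ δ/3 :=
        le_trans hn.le ((min_le_right _ _).trans (min_le_left _ _))
      have hrnp : (bob n).2 ≤ (δ/3)^(d+1) :=
        le_trans hn.le ((min_le_right _ _).trans (min_le_right _ _))
      obtain ⟨hdisty, v, hvx, hzone⟩ :=
        amove_good d ε (bob n) (swallow hd hε hε1 (bob n).1 (hr n) hrn1)
      refine ⟨v, hzone xl (hmemA n), ?_⟩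
      have h1 : dist (ratPt v) xl ≤ dist (ratPt v) (bob n).1 + dist (bob n).1 xl :=
        dist_triangle _ _ _
      have h2 : dist (bob n).1 xl ≤ (bob n).2 := by
        have := hmemB n
        rw [Metric.mem_closedBall] at this
        rw [dist_comm]
        exact this
      have h3 : (bob n).2 ^ (1/((d:ℝ)+1)) ≤ δ/3 :=
        rpow_small (by positivity) (hr n).le hrnp
      have h4 := hvx.trans h3
      have : δ/3 + δ/3 < δ := by linarith
      linarith
    -- conclude
    have hT : lagrange xl ≤ ε := by
      by_cases hrat : ∃ w : Fin d → ℚ, xl = ratPt w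
      · obtain ⟨w, rfl⟩ := hrat
        rw [lagrange_rat hd w]
        exact hε.le
      · push_neg at hrat
        rw [lagrange]
        apply Filter.liminf_le_of_frequently_le _
          (Filter.isBoundedUnder_of ⟨0, fun v => by positivity⟩)
        rw [Filter.frequently_cofinite_iff_infinite]
        intro hfin
        set F := hfin.toFinset.image (fun v => dist (ratPt v) xl) with hF
        have h1F : (1:ℝ) ∈ insert (1:ℝ) F := Finset.mem_insert_self _ _
        have hne : (insert (1:ℝ) F).Nonempty := ⟨1, h1F⟩
        set δ := (insert (1:ℝ) F).min' hne with hδdef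
        have hδpos : 0 < δ := by
          rw [hδdef, Finset.lt_min'_iff]
          intro y hy
          rcases Finset.mem_insert.mp hy with h | h
          · rw [h]; norm_num
          · rw [hF] at h
            obtain ⟨v, hv, rfl⟩ := Finset.mem_image.mp h
            rw [dist_pos]
            intro e
            exact hrat v e.symm
        obtain ⟨v, hv1, hv2⟩ := hkey δ hδpos
        have hvF : dist (ratPt v) xl ∈ insert (1:ℝ) F := by
          apply Finset.mem_insert_of_mem
          rw [hF]
          apply Finset.mem_image_of_mem
          rw [Set.Finite.mem_toFinset]
          exact hv1
        have := Finset.min'_le _ _ hvF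
        rw [← hδdef] at this
        linarith
    exact ⟨xl, Set.mem_iInter.mpr hmemB, hT⟩
end

section
/- For all d ∈ ℕ and 0 < ε < 1, the set BA_d(ε) = {x ∈ ℝᵈ : L(x) > ε} can be written as a countable union of uniformly β-porous subsets of ℝᵈ, where β = (ε/3)^{d+1} and L is the Lagrange spectrum function. -/
open Filter

theorem finite_rat_aux (c C : ℝ) (m : ℕ) : {r : ℚ | r.den ≤ m ∧ |(r:ℝ) - c| ≤ C}.Finite := by
  rcases le_or_gt 0 C with hC | hC
  · set N : ℤ := ⌈(|c|+C)*m⌉ with hN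
    have hsub : (fun r : ℚ => (r.num, r.den)) '' {r : ℚ | r.den ≤ m ∧ |(r:ℝ) - c| ≤ C} ⊆
        (Set.Icc (-N) N) ×ˢ (Set.Icc 0 m) := by
      rintro p ⟨r, ⟨h1, h2⟩, rfl⟩
      have habs : |(r:ℝ)| ≤ |c| + C := by
        have : |(r:ℝ)| ≤ |(r:ℝ) - c| + |c| := by
          calc |(r:ℝ)| = |((r:ℝ) - c) + c| := by ring_nf
            _ ≤ _ := abs_add_le _ _
        linarith
      have hnum : |(r.num : ℝ)| ≤ (|c|+C)*m := by
        have hden : (r:ℝ) * r.den = r.num := by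
          rw [Rat.cast_def]
          field_simp
        calc |(r.num:ℝ)| = |(r:ℝ)| * r.den := by
              rw [← hden, abs_mul, abs_of_nonneg (by positivity : (0:ℝ) ≤ (r.den:ℝ))]
          _ ≤ (|c|+C)*m := by
              apply mul_le_mul habs (by exact_mod_cast h1) (by positivity) (by positivity)
      have : |r.num| ≤ N := by
        have h2' : ((|r.num| : ℤ) : ℝ) ≤ (N:ℝ) :=
          le_trans (by push_cast; exact hnum) (Int.le_ceil _)
        exact_mod_cast h2'
      exact ⟨by rw [Set.mem_Icc]; exact abs_le.mp this, by simp [h1]⟩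
    have hfin : ((Set.Icc (-N) N) ×ˢ (Set.Icc (0:ℕ) m)).Finite :=
      (Set.finite_Icc _ _).prod (Set.finite_Icc _ _)
    apply Set.Finite.of_finite_image (hfin.subset hsub)
    intro r _ s _ h
    simp only [Prod.mk.injEq] at h
    exact Rat.ext h.1 h.2
  · convert Set.finite_empty
    ext r
    simp only [Set.mem_setOf_eq, Set.mem_empty_iff_false, iff_false, not_and]
    intro _ h
    exact absurd (le_trans (abs_nonneg _) h) (not_le.mpr hC)

theorem rat_gap_aux (p r : ℚ) (h : p ≠ r) : 1/((p.den:ℝ)*r.den) ≤ |(p:ℝ) - (r:ℝ)| := by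
  have key : (1:ℚ) ≤ |p - r| * ((p.den:ℚ) * (r.den:ℚ)) := by
    have hz : (p - r) * ((p.den:ℚ) * (r.den:ℚ)) = ((p.num * r.den - r.num * p.den : ℤ) : ℚ) := by
      have hp : (p:ℚ) * (p.den:ℚ) = (p.num:ℚ) := by exact_mod_cast Rat.mul_den_eq_num p
      have hr : (r:ℚ) * (r.den:ℚ) = (r.num:ℚ) := by exact_mod_cast Rat.mul_den_eq_num r
      push_cast
      ring_nf
      nlinarith [hp, hr]
    have hz0 : (p.num * r.den - r.num * p.den : ℤ) ≠ 0 := by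
      intro h0
      apply h
      have : (p - r) * ((p.den:ℚ) * (r.den:ℚ)) = 0 := by rw [hz, h0]; norm_num
      rcases mul_eq_zero.mp this with h1 | h1
      · linarith [sub_eq_zero.mp h1]
      · exfalso
        rcases mul_eq_zero.mp h1 with h2 | h2 <;>
          simp_all [Rat.den_ne_zero]
    have : (1:ℚ) ≤ |((p.num * r.den - r.num * p.den : ℤ) : ℚ)| := by
      rw [← Int.cast_abs]
      exact_mod_cast Int.one_le_abs hz0
    calc (1:ℚ) ≤ |((p.num * r.den - r.num * p.den : ℤ) : ℚ)| := this
      _ = |p - r| * ((p.den:ℚ) * (r.den:ℚ)) := by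
          rw [← hz, abs_mul, abs_of_nonneg (by positivity : (0:ℚ) ≤ (p.den:ℚ) * (r.den:ℚ))]
  have keyR : (1:ℝ) ≤ |(p:ℝ) - (r:ℝ)| * ((p.den:ℝ) * (r.den:ℝ)) := by
    have := key
    have h2 : ((|p - r| * ((p.den:ℚ) * (r.den:ℚ)) : ℚ) : ℝ) = |(p:ℝ) - (r:ℝ)| * ((p.den:ℝ) * (r.den:ℝ)) := by
      push_cast; ring
    calc (1:ℝ) ≤ ((|p - r| * ((p.den:ℚ) * (r.den:ℚ)) : ℚ) : ℝ) := by exact_mod_cast key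
      _ = _ := h2
  rw [div_le_iff₀ (by positivity)]
  linarith

theorem dirichlet_aux (d : ℕ) (hd : 0 < d) (x : Fin d → ℝ) (Q : ℕ) (hQ : 1 ≤ Q) :
    ∃ (q : ℕ) (p : Fin d → ℤ), 1 ≤ q ∧ q ≤ Q^d ∧ ∀ i, |(q:ℝ) * x i - p i| < 1/Q := by
  have hQR : (0:ℝ) < Q := by exact_mod_cast hQ
  set g : Fin (Q^d + 1) → (Fin d → Fin Q) := fun k i =>
    ⟨(⌊(Q:ℝ) * Int.fract ((k:ℕ) * x i)⌋).toNat, by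
      have h1 : (0:ℤ) ≤ ⌊(Q:ℝ) * Int.fract ((k:ℕ) * x i)⌋ :=
        Int.floor_nonneg.mpr (mul_nonneg hQR.le (Int.fract_nonneg _))
      have h2 : (Q:ℝ) * Int.fract ((k:ℕ) * x i) < Q := by
        nlinarith [Int.fract_lt_one (((k:ℕ):ℝ) * x i)]
      have h3 : ⌊(Q:ℝ) * Int.fract ((k:ℕ) * x i)⌋ < (Q:ℤ) := by
        apply Int.floor_lt.mpr; exact_mod_cast h2
      omega⟩ with hg
  have hcard : Fintype.card (Fin d → Fin Q) < Fintype.card (Fin (Q^d + 1)) := by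
    simp [Fintype.card_fun]
  obtain ⟨k₁, k₂, hne, heq⟩ := Fintype.exists_ne_map_eq_of_card_lt g hcard
  -- wlog k₁ < k₂
  wlog hlt : (k₁ : ℕ) < (k₂ : ℕ) generalizing k₁ k₂
  · have hv := Fin.val_ne_of_ne hne; exact this k₂ k₁ hne.symm heq.symm (by omega)
  refine ⟨(k₂ : ℕ) - (k₁ : ℕ), fun i => ⌊((k₂:ℕ):ℝ) * x i⌋ - ⌊((k₁:ℕ):ℝ) * x i⌋, by omega, by
    have := k₂.isLt; omega, ?_⟩
  intro i
  have hfl : ⌊(Q:ℝ) * Int.fract (((k₁:ℕ):ℝ) * x i)⌋ = ⌊(Q:ℝ) * Int.fract (((k₂:ℕ):ℝ) * x i)⌋ := by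
    have h1 : (0:ℤ) ≤ ⌊(Q:ℝ) * Int.fract (((k₁:ℕ):ℝ) * x i)⌋ :=
      Int.floor_nonneg.mpr (mul_nonneg hQR.le (Int.fract_nonneg _))
    have h2 : (0:ℤ) ≤ ⌊(Q:ℝ) * Int.fract (((k₂:ℕ):ℝ) * x i)⌋ :=
      Int.floor_nonneg.mpr (mul_nonneg hQR.le (Int.fract_nonneg _))
    have := congrFun heq i
    rw [hg] at this
    simp only at this
    have hv := congrArg Fin.val this
    simp only at hv
    omega
  have habs : |(Q:ℝ) * Int.fract (((k₂:ℕ):ℝ) * x i) - (Q:ℝ) * Int.fract (((k₁:ℕ):ℝ) * x i)| < 1 :=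
    Int.abs_sub_lt_one_of_floor_eq_floor hfl.symm
  have hkey : |Int.fract (((k₂:ℕ):ℝ) * x i) - Int.fract (((k₁:ℕ):ℝ) * x i)| < 1/Q := by
    rw [lt_div_iff₀ hQR]
    calc |Int.fract (((k₂:ℕ):ℝ) * x i) - Int.fract (((k₁:ℕ):ℝ) * x i)| * Q
        = |(Q:ℝ) * Int.fract (((k₂:ℕ):ℝ) * x i) - (Q:ℝ) * Int.fract (((k₁:ℕ):ℝ) * x i)| := by
          rw [← mul_sub, abs_mul, abs_of_nonneg hQR.le]; ring
      _ < 1 := habs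
  have hexp : ((((k₂:ℕ) - (k₁:ℕ) : ℕ)):ℝ) * x i - ((⌊((k₂:ℕ):ℝ) * x i⌋ - ⌊((k₁:ℕ):ℝ) * x i⌋ : ℤ):ℝ)
      = Int.fract (((k₂:ℕ):ℝ) * x i) - Int.fract (((k₁:ℕ):ℝ) * x i) := by
    rw [Int.fract, Int.fract]
    push_cast [Nat.cast_sub hlt.le]
    ring
  rw [hexp]
  exact hkey

namespace BAux

variable {d : ℕ}

/-- the function whose liminf is `lagrange`. -/
noncomputable def lagF (d : ℕ) (x : Fin d → ℝ) (v : Fin d → ℚ) : ℝ :=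
  (ratDen v : ℝ) ^ ((1 : ℝ) + 1 / d) * ‖x - ratPt v‖

lemma lagrange_eq (x : Fin d → ℝ) :
    lagrange x = sSup {a | ∀ᶠ v in cofinite, a ≤ lagF d x v} := liminf_eq

lemma ratDen_pos (v : Fin d → ℚ) : 0 < ratDen v := by
  rcases Nat.eq_zero_or_pos (ratDen v) with h | h
  · exfalso
    have := Finset.lcm_eq_zero_iff.mp h
    obtain ⟨i, _, hi⟩ := this
    exact (v i).den_nz hi
  · exact h

lemma den_le_ratDen (v : Fin d → ℚ) (i : Fin d) : (v i).den ≤ ratDen v :=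
  Nat.le_of_dvd (ratDen_pos v) (Finset.dvd_lcm (Finset.mem_univ i))

lemma lagF_nonneg (x : Fin d → ℝ) (v : Fin d → ℚ) : 0 ≤ lagF d x v :=
  mul_nonneg (Real.rpow_nonneg (Nat.cast_nonneg _) _) (norm_nonneg _)

lemma one_le_pow (v : Fin d → ℚ) : (1:ℝ) ≤ (ratDen v : ℝ) ^ ((1 : ℝ) + 1 / d) :=
  Real.one_le_rpow (by exact_mod_cast ratDen_pos v) (by positivity)

lemma norm_le_lagF (x : Fin d → ℝ) (v : Fin d → ℚ) : ‖x - ratPt v‖ ≤ lagF d x v := by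
  have := one_le_pow (d := d) v
  calc ‖x - ratPt v‖ = 1 * ‖x - ratPt v‖ := (one_mul _).symm
    _ ≤ _ := by apply mul_le_mul_of_nonneg_right this (norm_nonneg _)

/-- rationals with bounded denominator near a point form a finite set -/
lemma finite_rat (c C : ℝ) (m : ℕ) : {r : ℚ | r.den ≤ m ∧ |(r:ℝ) - c| ≤ C}.Finite :=
  finite_rat_aux c C m

lemma finite_small (x : Fin d → ℝ) (m : ℕ) (C : ℝ) :
    {v : Fin d → ℚ | ratDen v ≤ m ∧ ‖x - ratPt v‖ ≤ C}.Finite := by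
  have h : {v : Fin d → ℚ | ratDen v ≤ m ∧ ‖x - ratPt v‖ ≤ C} ⊆
      Set.pi Set.univ (fun i => {r : ℚ | r.den ≤ m ∧ |(r:ℝ) - x i| ≤ C}) := by
    rintro v ⟨h1, h2⟩ i _
    refine ⟨le_trans (den_le_ratDen v i) h1, ?_⟩
    have := norm_le_pi_norm (x - ratPt v) i
    simp only [Pi.sub_apply, Real.norm_eq_abs] at this
    rw [abs_sub_comm]
    exact le_trans this h2
  exact Set.Finite.subset (Set.Finite.pi (fun i => finite_rat (x i) C m)) h

/-- gap between distinct rationals -/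
lemma rat_gap (p r : ℚ) (h : p ≠ r) : 1/((p.den:ℝ)*r.den) ≤ |(p:ℝ) - (r:ℝ)| :=
  rat_gap_aux p r h

/-- Dirichlet's simultaneous approximation theorem -/
lemma dirichlet (hd : 0 < d) (x : Fin d → ℝ) (Q : ℕ) (hQ : 1 ≤ Q) :
    ∃ (q : ℕ) (p : Fin d → ℤ), 1 ≤ q ∧ q ≤ Q^d ∧ ∀ i, |(q:ℝ) * x i - p i| < 1/Q :=
  dirichlet_aux d hd x Q hQ

end BAux

namespace BAux

variable {d : ℕ}

/-- good rational approximation vector from Dirichlet -/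
lemma exists_approx (hd : 0 < d) (x : Fin d → ℝ) (Q : ℕ) (hQ : 1 ≤ Q) :
    ∃ (v : Fin d → ℚ) (q : ℕ), 1 ≤ q ∧ q ≤ Q^d ∧ ratDen v ∣ q ∧
      ‖x - ratPt v‖ < 1/((q:ℝ)*Q) := by
  obtain ⟨q, p, hq1, hqQ, hp⟩ := dirichlet hd x Q hQ
  have hq0 : (0:ℝ) < q := by exact_mod_cast hq1
  have hQ0 : (0:ℝ) < Q := by exact_mod_cast hQ
  refine ⟨fun i => (p i : ℚ) / (q : ℚ), q, hq1, hqQ, ?_, ?_⟩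
  · apply Finset.lcm_dvd
    intro i _
    have := Rat.den_dvd (p i) (q:ℤ)
    rw [Rat.divInt_eq_div] at this
    have h2 : (((p i : ℚ) / ((q:ℤ):ℚ)).den : ℤ) ∣ ((q:ℕ):ℤ) := by
      push_cast at this ⊢
      exact_mod_cast this
    simp only [Int.cast_natCast] at h2
    exact_mod_cast h2
  · rw [pi_norm_lt_iff (by positivity)]
    intro i
    have := hp i
    have hcast : (ratPt (fun i => (p i : ℚ) / (q : ℚ)) i) = (p i : ℝ) / (q:ℝ) := by
      simp [ratPt]
    simp only [Pi.sub_apply, Real.norm_eq_abs, hcast]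
    rw [abs_sub_comm] at this ⊢
    rw [show (p i : ℝ)/(q:ℝ) - x i = ((p i : ℝ) - q * x i)/q by field_simp, abs_div,
      abs_of_nonneg hq0.le, div_lt_div_iff₀ hq0 (by positivity)]
    calc |(p i:ℝ) - (q:ℝ) * x i| * ((q:ℝ)*Q) = |(q:ℝ) * x i - p i| * Q * q := by
          rw [abs_sub_comm]; ring
      _ < 1 * q := mul_lt_mul_of_pos_right ((lt_div_iff₀ hQ0).mp (hp i)) hq0

end BAux

namespace BAux

variable {d : ℕ}

noncomputable def Sset (d : ℕ) (x : Fin d → ℝ) : Set ℝ :=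
  {a : ℝ | ∀ᶠ v in cofinite, a ≤ lagF d x v}

lemma zero_mem_S (x : Fin d → ℝ) : (0:ℝ) ∈ Sset d x := by
  show ∀ᶠ v in cofinite, (0:ℝ) ≤ lagF d x v
  exact Eventually.of_forall (lagF_nonneg x)

lemma lagrange_eq' (x : Fin d → ℝ) : lagrange x = sSup (Sset d x) := lagrange_eq x

lemma lagF_le_of_dvd (hd : 0 < d) {v : Fin d → ℚ} {q : ℕ} (hdvd : ratDen v ∣ q) (hq : 1 ≤ q)
    (z : Fin d → ℝ) : lagF d z v ≤ (q:ℝ)^((1:ℝ)+1/d) * ‖z - ratPt v‖ := by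
  apply mul_le_mul_of_nonneg_right _ (norm_nonneg _)
  apply Real.rpow_le_rpow (Nat.cast_nonneg _) _ (by positivity)
  exact_mod_cast Nat.le_of_dvd hq hdvd

lemma q_rpow_eq (hd : 0 < d) (q : ℕ) (hq : 1 ≤ q) :
    (q:ℝ)^((1:ℝ)+1/d) = q * (q:ℝ)^(1/(d:ℝ)) := by
  rw [Real.rpow_add (by exact_mod_cast hq : (0:ℝ) < q), Real.rpow_one]

lemma rpow_inv_le (hd : 0 < d) {x B : ℝ} (hx : 0 ≤ x) (hB : 0 ≤ B) (h : x ≤ B^d) :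
    x^(1/(d:ℝ)) ≤ B := by
  have hd' : ((d:ℝ)) ≠ 0 := by exact_mod_cast hd.ne'
  calc x^(1/(d:ℝ)) ≤ (B^d)^(1/(d:ℝ)) :=
        Real.rpow_le_rpow hx h (by positivity)
    _ = B := by
        rw [← Real.rpow_natCast B d, ← Real.rpow_mul hB]
        rw [mul_one_div, div_self hd', Real.rpow_one]

lemma pow_d_alpha (hd : 0 < d) (Q : ℕ) (hQ : 1 ≤ Q) :
    (((Q:ℝ))^d)^((1:ℝ)+1/d) = (Q:ℝ)^(d+1) := by
  have hQ0 : (0:ℝ) ≤ Q := Nat.cast_nonneg _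
  have hd' : ((d:ℝ)) ≠ 0 := by exact_mod_cast hd.ne'
  rw [← Real.rpow_natCast (Q:ℝ) d, ← Real.rpow_mul hQ0, ← Real.rpow_natCast (Q:ℝ) (d+1)]
  congr 1
  push_cast
  field_simp

lemma rat_gap_real (u v : Fin d → ℚ) (h : u ≠ v) :
    1/((ratDen u : ℝ)*(ratDen v)) ≤ ‖ratPt u - ratPt v‖ := by
  obtain ⟨i, hi⟩ : ∃ i, u i ≠ v i := by
    by_contra hc
    push_neg at hc
    exact h (funext hc)
  have h1 : 1/(((u i).den:ℝ)*((v i).den)) ≤ |((u i):ℝ) - ((v i):ℝ)| := rat_gap _ _ hi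
  have h2 : 1/((ratDen u : ℝ)*(ratDen v)) ≤ 1/(((u i).den:ℝ)*((v i).den)) := by
    apply one_div_le_one_div_of_le (by positivity)
    have hu := den_le_ratDen u i
    have hv := den_le_ratDen v i
    have hu' : ((u i).den:ℝ) ≤ (ratDen u : ℝ) := by exact_mod_cast hu
    have hv' : ((v i).den:ℝ) ≤ (ratDen v : ℝ) := by exact_mod_cast hv
    apply mul_le_mul hu' hv' (by positivity) (by positivity)
  refine le_trans (le_trans h2 h1) ?_
  have := norm_le_pi_norm (ratPt u - ratPt v) i
  simpa [ratPt] using this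

lemma finite_bad_of_rat (hd : 0 < d) (u : Fin d → ℚ) (a : ℝ) :
    {v : Fin d → ℚ | lagF d (ratPt u) v < a}.Finite := by
  rcases le_or_gt a 0 with ha | ha
  · convert Set.finite_empty
    ext v
    simp only [Set.mem_setOf_eq, Set.mem_empty_iff_false, iff_false, not_lt]
    exact le_trans ha (lagF_nonneg _ _)
  · set b : ℕ := ratDen u with hb
    have hb0 : (0:ℝ) < b := by exact_mod_cast ratDen_pos u
    set N : ℕ := ⌈(a*b)^d⌉₊ with hN
    have hsub : {v : Fin d → ℚ | lagF d (ratPt u) v < a} ⊆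
        {u} ∪ {v : Fin d → ℚ | ratDen v ≤ N ∧ ‖ratPt u - ratPt v‖ ≤ a} := by
      intro v hv
      simp only [Set.mem_setOf_eq] at hv
      rcases eq_or_ne v u with rfl | hne
      · exact Or.inl rfl
      · right
        have hD0 : (0:ℝ) < (ratDen v : ℝ) := by exact_mod_cast ratDen_pos v
        have hnorm : ‖ratPt u - ratPt v‖ ≤ a := le_of_lt (lt_of_le_of_lt (norm_le_lagF _ _) hv)
        refine ⟨?_, hnorm⟩
        have hgap : 1/((b:ℝ)*(ratDen v)) ≤ ‖ratPt u - ratPt v‖ := rat_gap_real u v hne.symm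
        have hlow : (ratDen v : ℝ)^((1:ℝ)/d) / b ≤ lagF d (ratPt u) v := by
          have h1 : (ratDen v : ℝ)^((1:ℝ)+1/d) * (1/((b:ℝ)*(ratDen v))) ≤ lagF d (ratPt u) v := by
            apply mul_le_mul_of_nonneg_left hgap (Real.rpow_nonneg hD0.le _)
          calc (ratDen v : ℝ)^((1:ℝ)/d) / b
              = (ratDen v : ℝ)^((1:ℝ)+1/d) * (1/((b:ℝ)*(ratDen v))) := by
                rw [q_rpow_eq hd _ (ratDen_pos v)]
                field_simp
            _ ≤ _ := h1
        have h2 : (ratDen v : ℝ)^((1:ℝ)/d) ≤ a*b := by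
          rw [div_le_iff₀ hb0] at hlow
          nlinarith [hlow, hv, hb0]
        have h3 : (ratDen v : ℝ) ≤ (a*b)^d := by
          have hd' : ((d:ℝ)) ≠ 0 := by exact_mod_cast hd.ne'
          have := pow_le_pow_left₀ (Real.rpow_nonneg hD0.le _) h2 d
          rwa [← Real.rpow_natCast ((ratDen v : ℝ)^((1:ℝ)/d)) d, ← Real.rpow_mul hD0.le,
            one_div, inv_mul_cancel₀ hd', Real.rpow_one] at this
        have : (ratDen v : ℝ) ≤ (N:ℝ) := le_trans h3 (Nat.le_ceil _)
        exact_mod_cast this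
    exact Set.Finite.subset ((Set.finite_singleton u).union (finite_small (ratPt u) N a)) hsub

lemma not_bddAbove_S_rat (hd : 0 < d) (u : Fin d → ℚ) : ¬ BddAbove (Sset d (ratPt u)) := by
  have huniv : Sset d (ratPt u) = Set.univ := by
    ext a
    simp only [Sset, Set.mem_setOf_eq, Set.mem_univ, iff_true]
    rw [eventually_cofinite]
    exact (finite_bad_of_rat hd u a).subset (fun v hv => not_le.mp hv)
  rw [huniv]
  rintro ⟨b, hb⟩
  have := hb (Set.mem_univ (b+1))
  linarith

lemma lagrange_rat (hd : 0 < d) (u : Fin d → ℚ) : lagrange (ratPt u) = 0 := by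
  rw [lagrange_eq']
  exact Real.sSup_of_not_bddAbove (not_bddAbove_S_rat hd u)

lemma ne_rat_of_BA (hd : 0 < d) {ε : ℝ} (hε : 0 < ε) {x : Fin d → ℝ} (hx : ε < lagrange x) :
    ∀ u, x ≠ ratPt u := by
  rintro u rfl
  rw [lagrange_rat hd u] at hx
  linarith

lemma exists_small_lagF (hd : 0 < d) (x : Fin d → ℝ) (hx : ∀ u, x ≠ ratPt u)
    (F : Set (Fin d → ℚ)) (hF : F.Finite) : ∃ v ∉ F, lagF d x v ≤ 1 := by
  -- a positive lower bound for distances to members of F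
  obtain ⟨δ, hδ0, hδ⟩ : ∃ δ : ℝ, 0 < δ ∧ ∀ w ∈ F, δ ≤ ‖x - ratPt w‖ := by
    rcases hF.toFinset.eq_empty_or_nonempty with he | hne
    · exact ⟨1, one_pos, fun w hw => absurd ((Set.Finite.mem_toFinset hF).mpr hw)
        (by rw [he]; simp)⟩
    · refine ⟨hF.toFinset.inf' hne (fun w => ‖x - ratPt w‖), ?_, ?_⟩
      · rw [Finset.lt_inf'_iff]
        intro w _
        rw [norm_pos_iff]
        exact sub_ne_zero.mpr (hx w)
      · intro w hw
        exact Finset.inf'_le _ ((Set.Finite.mem_toFinset hF).mpr hw)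
  obtain ⟨Q', hQ'⟩ := exists_nat_one_div_lt hδ0
  set Q := Q' + 1 with hQdef
  have hQ1 : 1 ≤ Q := Nat.le_add_left _ _
  have hQ0 : (0:ℝ) < Q := by exact_mod_cast hQ1
  obtain ⟨v, q, hq1, hqQ, hdvd, hnear⟩ := exists_approx hd x Q hQ1
  have hq0 : (0:ℝ) < q := by exact_mod_cast hq1
  have hnotF : v ∉ F := by
    intro hvF
    have h1 : ‖x - ratPt v‖ < 1/((q:ℝ)*Q) := hnear
    have h2 : 1/((q:ℝ)*Q) ≤ 1/(Q:ℝ) := by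
      apply one_div_le_one_div_of_le hQ0
      have hq1' : (1:ℝ) ≤ (q:ℝ) := by exact_mod_cast hq1
      nlinarith
    have h3 : (1:ℝ)/(Q:ℝ) < δ := by
      push_cast
      exact_mod_cast hQ'
    exact absurd (hδ v hvF) (not_le.mpr (by linarith))
  refine ⟨v, hnotF, ?_⟩
  have hmain : lagF d x v ≤ (q:ℝ)^((1:ℝ)+1/d) * ‖x - ratPt v‖ := lagF_le_of_dvd hd hdvd hq1 x
  have hq1d : (q:ℝ)^((1:ℝ)/d) ≤ (Q:ℝ) := by
    apply rpow_inv_le hd hq0.le hQ0.le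
    exact_mod_cast hqQ
  calc lagF d x v ≤ (q:ℝ)^((1:ℝ)+1/d) * ‖x - ratPt v‖ := hmain
    _ ≤ (q:ℝ)^((1:ℝ)+1/d) * (1/((q:ℝ)*Q)) :=
        mul_le_mul_of_nonneg_left hnear.le (Real.rpow_nonneg hq0.le _)
    _ = (q:ℝ)^((1:ℝ)/d) / Q := by
        rw [q_rpow_eq hd q hq1]
        field_simp
    _ ≤ 1 := by
        rw [div_le_one hQ0]
        exact hq1d

lemma bddAbove_S (hd : 0 < d) (x : Fin d → ℝ) (hx : ∀ u, x ≠ ratPt u) :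
    BddAbove (Sset d x) := by
  refine ⟨1, fun a ha => ?_⟩
  rw [Sset, Set.mem_setOf_eq, eventually_cofinite] at ha
  obtain ⟨v, hv, hv1⟩ := exists_small_lagF hd x hx _ ha
  simp only [Set.mem_setOf_eq, not_not] at hv
  exact le_trans hv hv1

end BAux

namespace BAux

variable {d : ℕ}

def ESet (d : ℕ) (ε : ℝ) (n m k : ℕ) : Set (Fin d → ℝ) :=
  {x | (∀ v, m ≤ ratDen v → ε + 1/(n+1) ≤ lagF d x v) ∧
       (∀ v, ratDen v < m → 1/(k+1) ≤ ‖x - ratPt v‖)}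

lemma exists_pos_dist (x : Fin d → ℝ) (hx : ∀ u, x ≠ ratPt u)
    (F : Set (Fin d → ℚ)) (hF : F.Finite) :
    ∃ δ : ℝ, 0 < δ ∧ ∀ w ∈ F, δ ≤ ‖x - ratPt w‖ := by
  rcases hF.toFinset.eq_empty_or_nonempty with he | hne
  · exact ⟨1, one_pos, fun w hw => absurd ((Set.Finite.mem_toFinset hF).mpr hw)
      (by rw [he]; simp)⟩
  · refine ⟨hF.toFinset.inf' hne (fun w => ‖x - ratPt w‖), ?_, ?_⟩
    · rw [Finset.lt_inf'_iff]
      intro w _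
      rw [norm_pos_iff]
      exact sub_ne_zero.mpr (hx w)
    · intro w hw
      exact Finset.inf'_le _ ((Set.Finite.mem_toFinset hF).mpr hw)

lemma ne_rat_of_ESet {ε : ℝ} (hε : 0 < ε) {n m k : ℕ} {x : Fin d → ℝ}
    (hx : x ∈ ESet d ε n m k) : ∀ u, x ≠ ratPt u := by
  rintro u rfl
  obtain ⟨h1, h2⟩ := hx
  rcases le_or_gt m (ratDen u) with hm | hm
  · have := h1 u hm
    have hz : lagF d (ratPt u) u = 0 := by
      simp [lagF]
    rw [hz] at this
    have : (0:ℝ) < 1/(n+1:ℝ) := by positivity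
    linarith [this]
  · have := h2 u hm
    simp only [sub_self, norm_zero] at this
    have h0 : (0:ℝ) < 1/(k+1:ℝ) := by positivity
    linarith

lemma mem_BA_of_mem_ESet (hd : 0 < d) {ε : ℝ} (hε : 0 < ε) {n m k : ℕ} {x : Fin d → ℝ}
    (hx : x ∈ ESet d ε n m k) : ε < lagrange x := by
  obtain ⟨h1, h2⟩ := hx
  have hirr : ∀ u, x ≠ ratPt u := ne_rat_of_ESet hε ⟨h1, h2⟩
  have hbdd : BddAbove (Sset d x) := bddAbove_S hd x hirr
  have hmem : ε + 1/(n+1) ∈ Sset d x := by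
    show ∀ᶠ v in cofinite, ε + 1/(n+1:ℝ) ≤ lagF d x v
    rw [eventually_cofinite]
    apply (finite_small x m (ε + 1/(n+1))).subset
    intro v hv
    simp only [Set.mem_setOf_eq, not_le] at hv
    have hmlt : ratDen v < m := by
      by_contra hge
      exact absurd (h1 v (not_lt.mp hge)) (not_le.mpr hv)
    exact ⟨hmlt.le, le_trans (norm_le_lagF x v) hv.le⟩
  have : ε + 1/(n+1:ℝ) ≤ lagrange x := by
    rw [lagrange_eq']
    exact le_csSup hbdd hmem
  have h0 : (0:ℝ) < 1/(n+1:ℝ) := by positivity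
  linarith

lemma exists_ESet (hd : 0 < d) {ε : ℝ} (hε : 0 < ε) {x : Fin d → ℝ}
    (hx : ε < lagrange x) : ∃ n m k, x ∈ ESet d ε n m k := by
  have hirr : ∀ u, x ≠ ratPt u := ne_rat_of_BA hd hε hx
  rw [lagrange_eq'] at hx
  obtain ⟨a, ha, hεa⟩ := exists_lt_of_lt_csSup ⟨0, zero_mem_S x⟩ hx
  obtain ⟨n, hn⟩ := exists_nat_one_div_lt (by linarith : (0:ℝ) < a - ε)
  have hF : {v : Fin d → ℚ | ¬ a ≤ lagF d x v}.Finite := eventually_cofinite.mp ha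
  set m := hF.toFinset.sup ratDen + 1 with hm
  have hcond1 : ∀ v, m ≤ ratDen v → ε + 1/(n+1) ≤ lagF d x v := by
    intro v hv
    have hvF : v ∉ hF.toFinset := by
      intro hvF
      have := Finset.le_sup (f := ratDen) hvF
      omega
    rw [Set.Finite.mem_toFinset, Set.mem_setOf_eq, not_not] at hvF
    have : 1/(n+1:ℝ) ≤ a - ε := by push_cast at hn ⊢; linarith
    linarith
  have hG : {v : Fin d → ℚ | ratDen v ≤ m ∧ ‖x - ratPt v‖ ≤ 1}.Finite := finite_small x m 1
  obtain ⟨δ, hδ0, hδ⟩ := exists_pos_dist x hirr _ hG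
  obtain ⟨k, hk⟩ := exists_nat_one_div_lt (lt_min_iff.mpr ⟨hδ0, one_pos⟩ : (0:ℝ) < min δ 1)
  refine ⟨n, m, k, hcond1, ?_⟩
  intro v hv
  rcases le_or_gt ‖x - ratPt v‖ 1 with hle | hgt
  · have := hδ v ⟨hv.le, hle⟩
    have h2 : 1/(k+1:ℝ) < δ := lt_of_lt_of_le hk (min_le_left _ _)
    push_cast at h2 ⊢
    linarith
  · have h2 : 1/(k+1:ℝ) < 1 := lt_of_lt_of_le hk (min_le_right _ _)
    push_cast at h2 ⊢
    linarith

end BAux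

namespace BAux

variable {d : ℕ}

set_option maxHeartbeats 2000000 in
lemma porous (hd : 0 < d) {ε : ℝ} (hε : 0 < ε) (hε1 : ε < 1) (n m k : ℕ) :
    ∃ r₀ : ℝ, 0 < r₀ ∧ ∀ (x : Fin d → ℝ) (r : ℝ), 0 < r → r ≤ r₀ →
      ∃ y : Fin d → ℝ, Metric.ball y ((ε/3)^(d+1) * r) ⊆ Metric.closedBall x r ∧
        Metric.ball y ((ε/3)^(d+1) * r) ∩ ESet d ε n m k = ∅ := by
  set β : ℝ := (ε/3)^(d+1) with hβ
  have hβ0 : 0 < β := by positivity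
  have hβε3 : β ≤ ε/3 := by
    rw [hβ]
    apply pow_le_of_le_one (by positivity) (by linarith) (by omega)
  have hβ19 : β ≤ 1/9 := by
    rw [hβ]
    calc (ε/3)^(d+1) ≤ (1/3:ℝ)^(d+1) := by
          apply pow_le_pow_left₀ (by positivity) (by linarith)
      _ ≤ (1/3:ℝ)^2 := by
          apply pow_le_pow_of_le_one (by norm_num) (by norm_num) (by omega)
      _ = 1/9 := by norm_num
  have hβ1 : β < 1 := by linarith
  refine ⟨min 1 ((1/(2*(k+1)))^(d+1)), lt_min one_pos (by positivity), ?_⟩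
  intro x r hr0 hrr₀
  have hr1 : r ≤ 1 := le_trans hrr₀ (min_le_left _ _)
  have hrk : r ≤ (1/(2*(k+1:ℝ)))^(d+1) := le_trans hrr₀ (min_le_right _ _)
  have hεd1 : ε^d ≤ 1 := pow_le_one₀ hε.le hε1.le
  -- choice of Q
  set L : ℝ := (9/8)^(d+1)/(ε^d * r) with hL
  have hεdr : 0 < ε^d * r := by positivity
  have hL1 : 1 ≤ L := by
    rw [hL, le_div_iff₀ hεdr]
    have h98 : (1:ℝ) ≤ (9/8:ℝ)^(d+1) := one_le_pow₀ (by norm_num)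
    nlinarith
  have hM1 : (1:ℝ) < (2:ℝ)^(d+1) := one_lt_pow₀ (by norm_num) (by omega)
  obtain ⟨j₀, hj₀⟩ : ∃ j : ℕ, L ≤ ((2:ℝ)^(d+1))^j := by
    obtain ⟨j, hj⟩ := pow_unbounded_of_one_lt L hM1
    exact ⟨j, hj.le⟩
  have hex : ∃ j : ℕ, L ≤ ((2:ℝ)^(d+1))^j := ⟨j₀, hj₀⟩
  obtain ⟨j, hfind, hjmin⟩ : ∃ j : ℕ, (L ≤ ((2:ℝ)^(d+1))^j) ∧
      ∀ j' : ℕ, j' < j → ¬ L ≤ ((2:ℝ)^(d+1))^j' :=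
    ⟨Nat.find hex, Nat.find_spec hex, fun j' hj' => Nat.find_min hex hj'⟩
  set Q : ℕ := 2^j with hQ
  have hQ1 : 1 ≤ Q := Nat.one_le_two_pow
  have hQR0 : (0:ℝ) < Q := by exact_mod_cast hQ1
  have hQpow : ((Q:ℝ))^(d+1) = ((2:ℝ)^(d+1))^j := by
    rw [hQ]
    push_cast
    rw [← pow_mul, ← pow_mul, Nat.mul_comm]
  have hQL : L ≤ ((Q:ℝ))^(d+1) := by rw [hQpow]; exact hfind
  have hQU : ((Q:ℝ))^(d+1) ≤ (3:ℝ)^(d+1)/(ε^d * r) := by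
    rcases Nat.eq_zero_or_pos j with hj0 | hjpos
    · rw [hQpow, hj0]
      simp only [pow_zero]
      calc (1:ℝ) ≤ L := hL1
        _ ≤ (3:ℝ)^(d+1)/(ε^d * r) := by
            rw [hL]
            apply div_le_div_of_nonneg_right _ hεdr.le
            apply pow_le_pow_left₀ (by norm_num) (by norm_num)
    · have hj' : ¬ L ≤ ((2:ℝ)^(d+1))^(j-1) := hjmin _ (by omega)
      push_neg at hj'
      rw [hQpow]
      have : ((2:ℝ)^(d+1))^j = (2:ℝ)^(d+1) * ((2:ℝ)^(d+1))^(j-1) := by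
        rw [← pow_succ']
        congr 1
        omega
      rw [this]
      calc (2:ℝ)^(d+1) * ((2:ℝ)^(d+1))^(j-1) ≤ (2:ℝ)^(d+1) * L := by
            apply mul_le_mul_of_nonneg_left hj'.le (by positivity)
        _ ≤ (3:ℝ)^(d+1)/(ε^d * r) := by
            rw [hL, ← mul_div_assoc, div_le_div_iff₀ hεdr hεdr]
            have h23 : (2:ℝ)^(d+1) * (9/8)^(d+1) ≤ (3:ℝ)^(d+1) := by
              rw [← mul_pow]
              apply pow_le_pow_left₀ (by norm_num) (by norm_num)
            nlinarith
  -- the Dirichlet approximation at scale Q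
  obtain ⟨v, q, hq1, hqQd, hdvd, hnear⟩ := exists_approx hd x Q hQ1
  have hqR0 : (0:ℝ) < q := by exact_mod_cast hq1
  have hqR1 : (1:ℝ) ≤ q := by exact_mod_cast hq1
  have hqQR : (q:ℝ) ≤ (Q:ℝ)^d := by exact_mod_cast hqQd
  have hqQ0 : (0:ℝ) < (q:ℝ)*Q := by positivity
  have hQd1pos : (0:ℝ) < ((Q:ℝ))^(d+1) := by positivity
  have hLpos : (0:ℝ) < L := by linarith
  -- 1/Q is small
  have h98one : (1:ℝ) ≤ (9/8:ℝ)^(d+1) := one_le_pow₀ (by norm_num)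
  have hQinvp : ((1:ℝ)/Q)^(d+1) ≤ r := by
    rw [div_pow, one_pow]
    calc (1:ℝ)/((Q:ℝ)^(d+1)) ≤ 1/L := one_div_le_one_div_of_le hLpos hQL
      _ = (ε^d * r)/((9/8:ℝ)^(d+1)) := by rw [hL, one_div_div]
      _ ≤ (ε^d * r)/1 := by
          apply div_le_div_of_nonneg_left hεdr.le (by norm_num) h98one
      _ ≤ r := by
          rw [div_one]
          nlinarith
  have hQinv : (1:ℝ)/Q ≤ 1/(2*(k+1)) := by
    apply le_of_pow_le_pow_left₀ (Nat.succ_ne_zero d) (by positivity)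
    exact le_trans hQinvp hrk
  have hqQinv : (1:ℝ)/((q:ℝ)*Q) ≤ 1/(2*(k+1)) := by
    refine le_trans (one_div_le_one_div_of_le hQR0 ?_) hQinv
    exact le_mul_of_one_le_left hQR0.le hqR1
  have hβrk : β*r ≤ 1/(2*(k+1)) := by
    have h1 : β*r ≤ r := by nlinarith
    have h2 : ((1:ℝ)/(2*(k+1)))^(d+1) ≤ 1/(2*(k+1)) := by
      apply pow_le_of_le_one (by positivity) _ (Nat.succ_ne_zero d)
      rw [div_le_one (by positivity)]
      push_cast
      linarith
    linarith [le_trans hrk h2]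
  have hkinv : (1:ℝ)/(2*(k+1)) + 1/(2*(k+1)) = 1/(k+1:ℝ) := by
    rw [← one_div_mul_one_div]
    ring
  -- q^α and its bounds
  set qα : ℝ := (q:ℝ)^((1:ℝ)+1/d) with hqα
  have hqα1 : (1:ℝ) ≤ qα := Real.one_le_rpow hqR1 (by positivity)
  have hqα0 : (0:ℝ) < qα := by linarith
  have hqαQ : qα ≤ ((Q:ℝ))^(d+1) := by
    rw [hqα, ← pow_d_alpha hd Q hQ1]
    exact Real.rpow_le_rpow hqR0.le hqQR (by positivity)
  have hβrQd : β*r*((Q:ℝ))^(d+1) ≤ ε := by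
    calc β*r*((Q:ℝ))^(d+1) ≤ β*r*((3:ℝ)^(d+1)/(ε^d * r)) := by
          apply mul_le_mul_of_nonneg_left hQU (by positivity)
      _ = ε := by
          rw [hβ, div_pow]
          field_simp
          ring
  -- the kill lemma
  have hkill : ∀ z : Fin d → ℝ, ‖z - ratPt v‖ * qα < ε → ‖z - ratPt v‖ < 1/(k+1:ℝ) →
      z ∉ ESet d ε n m k := by
    intro z hz1 hz2 hzE
    obtain ⟨hc1, hc2⟩ := hzE
    rcases le_or_gt m (ratDen v) with hm | hm
    · have h1 := hc1 v hm
      have h2 : lagF d z v < ε := by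
        calc lagF d z v ≤ qα * ‖z - ratPt v‖ := lagF_le_of_dvd hd hdvd hq1 z
          _ = ‖z - ratPt v‖ * qα := mul_comm _ _
          _ < ε := hz1
      have h3 : (0:ℝ) < 1/(n+1:ℝ) := by positivity
      linarith
    · exact absurd (hc2 v hm) (not_le.mpr hz2)
  -- case split on distance from x to the rational point
  rcases le_or_gt (1/((q:ℝ)*Q)) ((1-β)*r) with hcase | hcase
  · -- near case : hole centered at the rational point
    refine ⟨ratPt v, ?_, ?_⟩
    · intro z hz
      rw [Metric.mem_ball, dist_eq_norm] at hz
      rw [Metric.mem_closedBall, dist_eq_norm]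
      have h1 : ‖z - x‖ ≤ ‖z - ratPt v‖ + ‖x - ratPt v‖ := by
        rw [norm_sub_rev x]
        exact norm_sub_le_norm_sub_add_norm_sub z (ratPt v) x
      linarith [hnear]
    · rw [Set.eq_empty_iff_forall_notMem]
      rintro z ⟨hz, hzE⟩
      rw [Metric.mem_ball, dist_eq_norm] at hz
      refine hkill z ?_ ?_ hzE
      · calc ‖z - ratPt v‖ * qα ≤ ‖z - ratPt v‖ * ((Q:ℝ))^(d+1) := by
              apply mul_le_mul_of_nonneg_left hqαQ (norm_nonneg _)
          _ < β*r*((Q:ℝ))^(d+1) := by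
              apply mul_lt_mul_of_pos_right hz hQd1pos
          _ ≤ ε := hβrQd
      · have : (1:ℝ)/(2*(k+1)) < 1/(k+1:ℝ) := by
          rw [div_lt_div_iff₀ (by positivity) (by positivity)]
          push_cast
          nlinarith [Nat.cast_nonneg (α := ℝ) k]
        linarith
  · -- far case : hole centered at x
    have h1β : (8/9:ℝ) ≤ 1 - β := by linarith
    have hcase' : (1-β) * (r * ((q:ℝ)*Q)) < 1 := by
      have h1 := mul_lt_mul_of_pos_right hcase hqQ0
      rw [one_div, inv_mul_cancel₀ hqQ0.ne'] at h1
      calc (1-β) * (r * ((q:ℝ)*Q)) = (1-β)*r*((q:ℝ)*Q) := by ring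
        _ < 1 := h1
    have hr98 : r < (9/8)/((q:ℝ)*Q) := by
      rw [lt_div_iff₀ hqQ0]
      nlinarith [mul_pos hr0 hqQ0]
    have hq98 : (q:ℝ) < (9/8)/(r*(Q:ℝ)) := by
      rw [lt_div_iff₀ (by positivity)]
      nlinarith [mul_pos hr0 hqQ0]
    have hqb : (q:ℝ) ≤ ((8/9)*ε*Q)^d := by
      have key : (9/8)/(r*(Q:ℝ)) ≤ ((8/9)*ε*Q)^d := by
        rw [div_le_iff₀ (by positivity), mul_pow, mul_pow]
        have h89 : ((8/9:ℝ))^d * ((9/8:ℝ))^d = 1 := by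
          rw [← mul_pow]
          norm_num
        have hQL' : (9/8:ℝ)^(d+1) ≤ ε^d * r * ((Q:ℝ))^(d+1) := by
          rw [hL, div_le_iff₀ hεdr] at hQL
          nlinarith
        have expand : ((Q:ℝ))^(d+1) = (Q:ℝ)^d * Q := pow_succ _ _
        rw [expand] at hQL'
        have h98e : ((9/8:ℝ))^(d+1) = (9/8:ℝ)^d * (9/8) := pow_succ _ _
        rw [h98e] at hQL'
        -- goal : 9/8 ≤ (8/9)^d * ε^d * Q^d * (r * Q)
        have h1 : (8/9:ℝ)^d * ((9/8:ℝ)^d * (9/8)) ≤ (8/9:ℝ)^d * (ε^d * r * ((Q:ℝ)^d * Q)) := by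
          apply mul_le_mul_of_nonneg_left hQL' (by positivity)
        rw [← mul_assoc, h89, one_mul] at h1
        nlinarith [h1]
      linarith
    have h1d : (q:ℝ)^(1/(d:ℝ)) ≤ (8/9)*ε*Q := rpow_inv_le hd hqR0.le (by positivity) hqb
    have hkey : β*r + 1/((q:ℝ)*Q) ≤ ε/qα := by
      have hβr8 : β*r ≤ (1/8)/((q:ℝ)*Q) := by
        calc β*r ≤ (1/9)*r := by nlinarith
          _ ≤ (1/9)*((9/8)/((q:ℝ)*Q)) := by nlinarith
          _ = (1/8)/((q:ℝ)*Q) := by ring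
      have hsum : β*r + 1/((q:ℝ)*Q) ≤ (9/8)/((q:ℝ)*Q) := by
        have h18 : ((1:ℝ)/8)/((q:ℝ)*Q) + 1/((q:ℝ)*Q) = (9/8)/((q:ℝ)*Q) := by
          rw [← add_div]
          norm_num
        linarith
      refine le_trans hsum ?_
      rw [div_le_div_iff₀ hqQ0 hqα0]
      have hexp : qα = (q:ℝ) * (q:ℝ)^(1/(d:ℝ)) := by
        rw [hqα, q_rpow_eq hd q hq1]
      rw [hexp]
      have : (9/8:ℝ) * ((q:ℝ) * (q:ℝ)^(1/(d:ℝ))) ≤ (9/8) * ((q:ℝ) * ((8/9)*ε*Q)) := by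
        apply mul_le_mul_of_nonneg_left _ (by norm_num)
        apply mul_le_mul_of_nonneg_left h1d hqR0.le
      calc (9/8:ℝ) * ((q:ℝ) * (q:ℝ)^(1/(d:ℝ))) ≤ (9/8) * ((q:ℝ) * ((8/9)*ε*Q)) := this
        _ = ε * ((q:ℝ)*Q) := by ring
    refine ⟨x, ?_, ?_⟩
    · intro z hz
      rw [Metric.mem_ball, dist_eq_norm] at hz
      rw [Metric.mem_closedBall, dist_eq_norm]
      nlinarith [norm_nonneg (z - x)]
    · rw [Set.eq_empty_iff_forall_notMem]
      rintro z ⟨hz, hzE⟩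
      rw [Metric.mem_ball, dist_eq_norm] at hz
      have hdist : ‖z - ratPt v‖ < β*r + 1/((q:ℝ)*Q) := by
        calc ‖z - ratPt v‖ ≤ ‖z - x‖ + ‖x - ratPt v‖ :=
              norm_sub_le_norm_sub_add_norm_sub z x (ratPt v)
          _ < β*r + 1/((q:ℝ)*Q) := by linarith [hnear]
      refine hkill z ?_ ?_ hzE
      · rw [← lt_div_iff₀ hqα0]
        exact lt_of_lt_of_le hdist hkey
      · calc ‖z - ratPt v‖ < β*r + 1/((q:ℝ)*Q) := hdist
          _ ≤ 1/(2*(k+1)) + 1/(2*(k+1)) := add_le_add hβrk hqQinv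
          _ = 1/(k+1:ℝ) := hkinv

end BAux


/-- **Theorem.** For all `d ≥ 1` and `0 < ε < 1`, the set
`BA_d(ε) = {x ∈ ℝᵈ : L(x) > ε}` is a countable union of uniformly `β`-porous subsets of
`ℝᵈ`, where `β = (ε/3)^{d+1}`. -/
theorem ba_set_countable_union_uniformly_porous
    (d : ℕ) (hd : 0 < d) (ε : ℝ) (hε : 0 < ε) (hε1 : ε < 1) :
    ∃ E : ℕ → Set (Fin d → ℝ),
      (∀ n, UniformlyPorous ((ε / 3) ^ (d + 1)) (E n)) ∧
        {x : Fin d → ℝ | ε < lagrange x} = ⋃ n, E n := by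
  classical
  let e : ℕ ≃ ℕ × ℕ × ℕ := (Denumerable.eqv (ℕ × ℕ × ℕ)).symm
  refine ⟨fun i => BAux.ESet d ε (e i).1 (e i).2.1 (e i).2.2, ?_, ?_⟩
  · intro i
    exact BAux.porous hd hε hε1 _ _ _
  · ext x
    simp only [Set.mem_setOf_eq, Set.mem_iUnion]
    constructor
    · intro hx
      obtain ⟨n, m, k, hE⟩ := BAux.exists_ESet hd hε hx
      refine ⟨e.symm (n, m, k), ?_⟩
      rw [Equiv.apply_symm_apply]
      exact hE
    · rintro ⟨i, hi⟩
      exact BAux.mem_BA_of_mem_ESet hd hε hi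
end
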